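/- arXiv:2412.06402 — 10 statements merged into one kernel-verified Lean document; each statement's English description precedes it below -/
import Mathlib

section
/- For all n ≥ 1, the VC-dimension of the family of total orders on [n], viewed as a set family over the set of partial orders on [n] via compatibility, is at least 2(n−3). -/
/-- A digraph (relation) is acyclic iff its transitive closure is irreflexive. -/
def IsAcyclicRel {α : Type*} (r : α → α → Prop) : Prop :=
  Irreflexive (Relation.TransGen r)

/-- Two orders are compatible iff the union of their relations is acyclic. -/
def OrdCompat {α : Type*} (r s : α → α → Prop) : Prop :=
  IsAcyclicRel (fun a b => r a b ∨ s a b)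

/-- The set of (strict) partial orders on `[n] = Fin n`. -/
def PartialOrds (n : ℕ) : Set (Fin n → Fin n → Prop) :=
  {r | Irreflexive r ∧ Transitive r}

/-- The set of (strict) total orders on `[n] = Fin n`. -/
def TotalOrds (n : ℕ) : Set (Fin n → Fin n → Prop) :=
  {r | Irreflexive r ∧ Transitive r ∧ ∀ a b : Fin n, a ≠ b → r a b ∨ r b a}

/-- `S ⊆ Y` is shattered by the family `F ⊆ X` via the relation `rel`:
every subset of `S` is cut out by some `B ∈ F`. -/
def ShattersVia {X Y : Type*} (F : Set X) (rel : X → Y → Prop) (S : Set Y) : Prop :=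
  ∀ A ⊆ S, ∃ B ∈ F, {y ∈ S | rel B y} = A

namespace Stmt5Aux

variable {n : ℕ}

def Pord (x : Fin n) : Fin n → Fin n → Prop :=
  fun u v => (u.val = 0 ∧ v.val = x.val) ∨ (u.val = x.val ∧ v.val = 2) ∨ (u.val = 0 ∧ v.val = 2)

def Qord (x : Fin n) : Fin n → Fin n → Prop :=
  fun u v => u.val = 1 ∧ v.val = x.val

def emb (i : Fin (n - 3)) : Fin n := ⟨i.val + 3, by have := i.isLt; omega⟩

def gfun : Bool × Fin (n - 3) → (Fin n → Fin n → Prop) :=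
  fun p => cond p.1 (Qord (emb p.2)) (Pord (emb p.2))

lemma Pord_partial {x : Fin n} (hx : 3 ≤ x.val) : Pord x ∈ PartialOrds n := by
  constructor
  · intro a ha
    simp only [Pord] at ha
    omega
  · intro a b c hab hbc
    simp only [Pord] at hab hbc ⊢
    omega

lemma Qord_partial {x : Fin n} (hx : 3 ≤ x.val) : Qord x ∈ PartialOrds n := by
  constructor
  · intro a ha
    simp only [Qord] at ha
    omega
  · intro a b c hab hbc
    simp only [Qord] at hab hbc ⊢
    omega

lemma compat_iff {T P : Fin n → Fin n → Prop} (hT : T ∈ TotalOrds n) (hP : Irreflexive P) :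
    OrdCompat T P ↔ ∀ u v, P u v → T u v := by
  obtain ⟨hTi, hTt, hTtot⟩ := hT
  unfold OrdCompat IsAcyclicRel
  constructor
  · intro hc u v huv
    by_contra hnt
    have hne : u ≠ v := fun h => hP v (h ▸ huv)
    have hvu : T v u := (hTtot u v hne).resolve_left hnt
    exact hc u (Relation.TransGen.tail (Relation.TransGen.single (Or.inr huv)) (Or.inl hvu))
  · intro hle a ha
    have key : ∀ x y : Fin n, Relation.TransGen (fun a b => T a b ∨ P a b) x y → T x y := by
      intro x y h
      induction h with
      | single h => exact h.elim id (hle _ _)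
      | tail _ h ih => exact hTt ih (h.elim id (hle _ _))
    exact hTi a (key a a ha)

open Classical in
noncomputable def keyf (A : Set (Fin n → Fin n → Prop)) (u : Fin n) : ℕ :=
  if u.val = 0 then 1 else if u.val = 1 then 3 else if u.val = 2 then 5
  else if Pord u ∈ A then (if Qord u ∈ A then 4 else 2)
  else if Qord u ∈ A then 6 else 0

lemma keyf_val0 (A : Set (Fin n → Fin n → Prop)) {u : Fin n} (h : u.val = 0) :
    keyf A u = 1 := by
  unfold keyf; rw [if_pos h]

lemma keyf_val1 (A : Set (Fin n → Fin n → Prop)) {u : Fin n} (h : u.val = 1) :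
    keyf A u = 3 := by
  unfold keyf; rw [if_neg (by omega), if_pos h]

lemma keyf_val2 (A : Set (Fin n → Fin n → Prop)) {u : Fin n} (h : u.val = 2) :
    keyf A u = 5 := by
  unfold keyf; rw [if_neg (by omega), if_neg (by omega), if_pos h]

open Classical in
lemma keyf_big (A : Set (Fin n → Fin n → Prop)) {x : Fin n} (hx : 3 ≤ x.val) :
    keyf A x = if Pord x ∈ A then (if Qord x ∈ A then 4 else 2)
      else if Qord x ∈ A then 6 else 0 := by
  unfold keyf
  rw [if_neg (by omega), if_neg (by omega), if_neg (by omega)]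

noncomputable def lexT (A : Set (Fin n → Fin n → Prop)) : Fin n → Fin n → Prop :=
  fun u v => keyf A u < keyf A v ∨ (keyf A u = keyf A v ∧ u.val < v.val)

lemma lexT_mem (A : Set (Fin n → Fin n → Prop)) : lexT A ∈ TotalOrds n := by
  refine ⟨?_, ?_, ?_⟩
  · intro a ha
    have h : keyf A a < keyf A a ∨ (keyf A a = keyf A a ∧ a.val < a.val) := ha
    omega
  · intro a b c hab hbc
    have h1 : keyf A a < keyf A b ∨ (keyf A a = keyf A b ∧ a.val < b.val) := hab
    have h2 : keyf A b < keyf A c ∨ (keyf A b = keyf A c ∧ b.val < c.val) := hbc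
    show keyf A a < keyf A c ∨ (keyf A a = keyf A c ∧ a.val < c.val)
    omega
  · intro a b hne
    have h : a.val ≠ b.val := fun h => hne (Fin.ext h)
    show (keyf A a < keyf A b ∨ (keyf A a = keyf A b ∧ a.val < b.val)) ∨
      (keyf A b < keyf A a ∨ (keyf A b = keyf A a ∧ b.val < a.val))
    omega

lemma gfun_inj : Function.Injective (gfun (n := n)) := by
  rintro ⟨b1, i1⟩ ⟨b2, i2⟩ h
  have h4 : i1.val + 3 < n := (emb i1).isLt
  have hn0 : 0 < n := by omega
  have hn2 : 2 < n := by omega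
  have hn1 : 1 < n := by omega
  cases b1 <;> cases b2 <;>
    simp only [gfun, Bool.cond_false, Bool.cond_true] at h
  · -- Pord = Pord
    have hp : Pord (emb i2) (⟨0, hn0⟩ : Fin n) (emb i1) := by
      rw [← h]; exact Or.inl ⟨rfl, rfl⟩
    have hi : i1 = i2 := by
      refine Fin.ext ?_
      rcases hp with ⟨-, hv⟩ | ⟨hu, -⟩ | ⟨-, hv⟩
      · have : i1.val + 3 = i2.val + 3 := hv
        omega
      · have : (0 : ℕ) = i2.val + 3 := hu
        omega
      · have : i1.val + 3 = 2 := hv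
        omega
    rw [hi]
  · -- Pord = Qord : impossible
    exfalso
    have hp : Qord (emb i2) (⟨0, hn0⟩ : Fin n) (⟨2, hn2⟩ : Fin n) := by
      rw [← h]; exact Or.inr (Or.inr ⟨rfl, rfl⟩)
    have : (0 : ℕ) = 1 := hp.1
    omega
  · -- Qord = Pord : impossible
    exfalso
    have hp : Qord (emb i1) (⟨0, hn0⟩ : Fin n) (⟨2, hn2⟩ : Fin n) := by
      rw [h]; exact Or.inr (Or.inr ⟨rfl, rfl⟩)
    have : (0 : ℕ) = 1 := hp.1
    omega
  · -- Qord = Qord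
    have hp : Qord (emb i2) (⟨1, hn1⟩ : Fin n) (emb i1) := by
      rw [← h]; exact ⟨rfl, rfl⟩
    have hi : i1 = i2 := by
      refine Fin.ext ?_
      have : i1.val + 3 = i2.val + 3 := hp.2
      omega
    rw [hi]

end Stmt5Aux

open Stmt5Aux in
theorem stmt5 {n : ℕ} (hn : 1 ≤ n) :
    ∃ S ⊆ PartialOrds n, S.Finite ∧ 2 * (n - 3) ≤ S.ncard ∧
      ShattersVia (TotalOrds n) OrdCompat S := by
  classical
  refine ⟨Set.range (gfun (n := n)), ?_, Set.finite_range _, ?_, ?_⟩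
  · rintro y ⟨⟨b, i⟩, rfl⟩
    have hx : 3 ≤ (emb i : Fin n).val := Nat.le_add_left 3 i.val
    cases b
    · exact Pord_partial hx
    · exact Qord_partial hx
  · have hcard : (Set.range (gfun (n := n))).ncard = 2 * (n - 3) := by
      rw [← Nat.card_coe_set_eq, Nat.card_range_of_injective gfun_inj]
      simp [Nat.card_eq_fintype_card]
    omega
  · intro A hA
    refine ⟨lexT A, lexT_mem A, ?_⟩
    ext y
    simp only [Set.mem_setOf_eq]
    constructor
    · rintro ⟨⟨⟨b, i⟩, rfl⟩, hcomp⟩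
      have hx : 3 ≤ (emb i : Fin n).val := Nat.le_add_left 3 i.val
      have h4 : i.val + 3 < n := (emb i).isLt
      have hp0 : 0 < n := by omega
      have hp1 : 1 < n := by omega
      have hp2 : 2 < n := by omega
      cases b
      · -- Pord case
        have hc' : ∀ u v, Pord (emb i) u v → lexT A u v :=
          (compat_iff (lexT_mem A) (Pord_partial hx).1).mp hcomp
        have h1 := hc' ⟨0, hp0⟩ (emb i) (Or.inl ⟨rfl, rfl⟩)
        have h2 := hc' (emb i) ⟨2, hp2⟩ (Or.inr (Or.inl ⟨rfl, rfl⟩))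
        have h1' : keyf A (⟨0, hp0⟩ : Fin n) < keyf A (emb i) ∨
            (keyf A (⟨0, hp0⟩ : Fin n) = keyf A (emb i) ∧ (0 : ℕ) < i.val + 3) := h1
        have h2' : keyf A (emb i) < keyf A (⟨2, hp2⟩ : Fin n) ∨
            (keyf A (emb i) = keyf A (⟨2, hp2⟩ : Fin n) ∧ i.val + 3 < 2) := h2
        rw [keyf_val0 A (u := (⟨0, hp0⟩ : Fin n)) rfl, keyf_big A hx] at h1'
        rw [keyf_val2 A (u := (⟨2, hp2⟩ : Fin n)) rfl, keyf_big A hx] at h2'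
        show Pord (emb i) ∈ A
        by_cases hPA : Pord (emb i) ∈ A
        · exact hPA
        · exfalso
          rw [if_neg hPA] at h1' h2'
          by_cases hQA : Qord (emb i) ∈ A
          · rw [if_pos hQA] at h2'; omega
          · rw [if_neg hQA] at h1'; omega
      · -- Qord case
        have hc' : ∀ u v, Qord (emb i) u v → lexT A u v :=
          (compat_iff (lexT_mem A) (Qord_partial hx).1).mp hcomp
        have h1 := hc' ⟨1, hp1⟩ (emb i) ⟨rfl, rfl⟩
        have h1' : keyf A (⟨1, hp1⟩ : Fin n) < keyf A (emb i) ∨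
            (keyf A (⟨1, hp1⟩ : Fin n) = keyf A (emb i) ∧ (1 : ℕ) < i.val + 3) := h1
        rw [keyf_val1 A (u := (⟨1, hp1⟩ : Fin n)) rfl, keyf_big A hx] at h1'
        show Qord (emb i) ∈ A
        by_cases hQA : Qord (emb i) ∈ A
        · exact hQA
        · exfalso
          rw [if_neg hQA, if_neg hQA] at h1'
          by_cases hPA : Pord (emb i) ∈ A
          · rw [if_pos hPA] at h1'; omega
          · rw [if_neg hPA] at h1'; omega
    · intro hyA
      obtain ⟨⟨b, i⟩, rfl⟩ := hA hyA
      have hx : 3 ≤ (emb i : Fin n).val := Nat.le_add_left 3 i.val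
      have h4 : i.val + 3 < n := (emb i).isLt
      refine ⟨⟨(b, i), rfl⟩, ?_⟩
      cases b
      · -- Pord case
        have hPA : Pord (emb i) ∈ A := hyA
        show OrdCompat (lexT A) (Pord (emb i))
        rw [compat_iff (lexT_mem A) (Pord_partial hx).1]
        intro u v huv
        have huv' : Pord (emb i) u v := huv
        show keyf A u < keyf A v ∨ (keyf A u = keyf A v ∧ u.val < v.val)
        rcases huv' with ⟨hu, hv⟩ | ⟨hu, hv⟩ | ⟨hu, hv⟩
        · have hv' : v = emb i := Fin.ext hv
          subst hv'
          left
          rw [keyf_val0 A hu, keyf_big A hx, if_pos hPA]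
          split_ifs <;> omega
        · have hu' : u = emb i := Fin.ext hu
          subst hu'
          left
          rw [keyf_val2 A hv, keyf_big A hx, if_pos hPA]
          split_ifs <;> omega
        · left
          rw [keyf_val0 A hu, keyf_val2 A hv]
          omega
      · -- Qord case
        have hQA : Qord (emb i) ∈ A := hyA
        show OrdCompat (lexT A) (Qord (emb i))
        rw [compat_iff (lexT_mem A) (Qord_partial hx).1]
        intro u v huv
        have huv' : Qord (emb i) u v := huv
        show keyf A u < keyf A v ∨ (keyf A u = keyf A v ∧ u.val < v.val)
        obtain ⟨hu, hv⟩ := huv'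
        have hv' : v = emb i := Fin.ext hv
        subst hv'
        left
        rw [keyf_val1 A hu, keyf_big A hx]
        simp only [if_pos hQA]
        split_ifs <;> omega
end

section
/- For all n ≥ 2, the VC-dimension of the family of total orders on [n] over the partial orders on [n] (via compatibility) is at least 3(⌊n/2⌋ − 1). -/
namespace Stmt6Aux

/-- The three partial orders attached to the pair `(2i, 2i+1)`, relating it to
the anchors `0` and `1`. -/
def Pj (n i j : ℕ) : Fin n → Fin n → Prop :=
  if j = 0 then fun u v => (u : ℕ) = 2*i ∧ (v : ℕ) = 2*i+1
  else if j = 1 then fun u v => (u : ℕ) = 0 ∧ ((v : ℕ) = 2*i ∨ (v : ℕ) = 2*i+1)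
  else fun u v => ((u : ℕ) = 2*i ∨ (u : ℕ) = 2*i+1) ∧ (v : ℕ) = 1

lemma Pj_partial {n : ℕ} (i j : ℕ) (hi : 1 ≤ i) : Pj n i j ∈ PartialOrds n := by
  constructor
  · intro u h
    unfold Pj at h
    split_ifs at h <;> omega
  · intro u v w h h'
    unfold Pj at h h' ⊢
    split_ifs at h h' ⊢ <;> exfalso <;> omega

/-- Region of an element within a pair, as a function of the three desired
compatibility bits `b1 b2 b3` and whether the element is the first of its pair. -/
def pairreg (b1 b2 b3 a : Bool) : ℕ :=
  if b2 && b3 then (if a == b1 then 3 else 4)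
  else if b2 then (if a == b1 then 6 else 7)
  else if b3 then (if a == b1 then 0 else 1)
  else (if a == b1 then 0 else 7)

/-- Region of each element of `[n]`; the anchors `0`, `1` sit in regions `2`, `5`. -/
def reg (k : ℕ) (c1 c2 c3 : ℕ → Bool) (u : ℕ) : ℕ :=
  if u = 0 then 2 else if u = 1 then 5 else if u < 2*k then
    pairreg (c1 (u/2)) (c2 (u/2)) (c3 (u/2)) (decide (u % 2 = 0))
  else 8

/-- The rank of an element: region times `n` plus the element itself. -/
def rk (n k : ℕ) (c1 c2 c3 : ℕ → Bool) (u : ℕ) : ℕ := reg k c1 c2 c3 u * n + u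

lemma rk_inj (n k : ℕ) (c1 c2 c3 : ℕ → Bool) {u v : ℕ} (hu : u < n) (hv : v < n)
    (h : rk n k c1 c2 c3 u = rk n k c1 c2 c3 v) : u = v := by
  have h2 := congrArg (· % n) h
  simp only [rk] at h2
  rwa [Nat.mul_comm (reg k c1 c2 c3 u) n, Nat.mul_comm (reg k c1 c2 c3 v) n,
    Nat.mul_add_mod, Nat.mul_add_mod, Nat.mod_eq_of_lt hu, Nat.mod_eq_of_lt hv] at h2

lemma rk_key (n k : ℕ) (hk : 2*k ≤ n) (c1 c2 c3 : ℕ → Bool) (i : ℕ)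
    (hi1 : 1 ≤ i) (hik : i < k) :
    ((rk n k c1 c2 c3 (2*i) < rk n k c1 c2 c3 (2*i+1)) ↔ c1 i = true)
    ∧ ((rk n k c1 c2 c3 0 < rk n k c1 c2 c3 (2*i)
        ∧ rk n k c1 c2 c3 0 < rk n k c1 c2 c3 (2*i+1)) ↔ c2 i = true)
    ∧ ((rk n k c1 c2 c3 (2*i) < rk n k c1 c2 c3 1
        ∧ rk n k c1 c2 c3 (2*i+1) < rk n k c1 c2 c3 1) ↔ c3 i = true) := by
  have e1 : 2*i/2 = i := by omega
  have e2 : (2*i) % 2 = 0 := by omega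
  have e3 : (2*i+1)/2 = i := by omega
  have e4 : (2*i+1) % 2 = 1 := by omega
  have ha : reg k c1 c2 c3 (2*i) = pairreg (c1 i) (c2 i) (c3 i) true := by
    unfold reg
    rw [if_neg (by omega : ¬(2*i = 0)), if_neg (by omega : ¬(2*i = 1)),
      if_pos (by omega : 2*i < 2*k), e1, e2]
    norm_num
  have hb : reg k c1 c2 c3 (2*i+1) = pairreg (c1 i) (c2 i) (c3 i) false := by
    unfold reg
    rw [if_neg (by omega : ¬(2*i+1 = 0)), if_neg (by omega : ¬(2*i+1 = 1)),
      if_pos (by omega : 2*i+1 < 2*k), e3, e4]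
    norm_num
  have h0 : reg k c1 c2 c3 0 = 2 := by simp [reg]
  have h1 : reg k c1 c2 c3 1 = 5 := by simp [reg]
  cases hb1 : c1 i <;> cases hb2 : c2 i <;> cases hb3 : c3 i <;>
    simp only [rk, ha, hb, h0, h1, pairreg, hb1, hb2, hb3] <;>
    simp <;> omega

lemma compat_iff {α : Type*} {T Q : α → α → Prop}
    (h1 : Irreflexive T) (h2 : Transitive T) (h3 : ∀ a b, a ≠ b → T a b ∨ T b a) :
    OrdCompat T Q ↔ ∀ u v, Q u v → T u v := by
  constructor
  · intro hc u v huv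
    by_contra hT
    rcases eq_or_ne u v with rfl | hne
    · exact hc u (Relation.TransGen.single (Or.inr huv))
    · rcases h3 u v hne with h | h
      · exact hT h
      · have step1 : Relation.TransGen (fun a b => T a b ∨ Q a b) u v :=
          Relation.TransGen.single (Or.inr huv)
        exact hc u (step1.tail (Or.inl h))
  · intro hs a ha
    have h4 : Relation.TransGen T a a :=
      Relation.TransGen.mono (r := fun a b => T a b ∨ Q a b) (p := T) (fun x y (hxy : T x y ∨ Q x y) => hxy.elim id (hs x y)) a a ha
    exact h1 a ((haveI : IsTrans α T := ⟨h2⟩; Relation.transGen_eq_self (r := T)) ▸ h4)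

end Stmt6Aux

open Stmt6Aux in
theorem stmt6 {n : ℕ} (hn : 2 ≤ n) :
    ∃ S ⊆ PartialOrds n, S.Finite ∧ 3 * (n / 2 - 1) ≤ S.ncard ∧
      ShattersVia (TotalOrds n) OrdCompat S := by
  classical
  set k := n / 2 with hkdef
  have hk : 2*k ≤ n := by omega
  have hk1 : 1 ≤ k := by omega
  refine ⟨(fun p : ℕ × ℕ => Pj n p.1 p.2) '' (Set.Ico 1 k ×ˢ {0, 1, 2}), ?_, ?_, ?_, ?_⟩
  · rintro r ⟨⟨i, j⟩, ⟨hi, _⟩, rfl⟩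
    exact Pj_partial i j hi.1
  · exact (((Set.finite_Ico 1 k).prod
      ((Set.finite_singleton 2).insert 1 |>.insert 0))).image _
  · -- cardinality
    have hinj : Set.InjOn (fun p : ℕ × ℕ => Pj n p.1 p.2)
        (Set.Ico 1 k ×ˢ ({0, 1, 2} : Set ℕ)) := by
      rintro ⟨i, j⟩ ⟨hi, hj⟩ ⟨i', j'⟩ ⟨hi', hj'⟩ heq
      simp only [Set.mem_Ico] at hi hi'
      simp only [Set.mem_insert_iff, Set.mem_singleton_iff] at hj hj'
      have hia : 2*i < n := by omega
      have hib : 2*i+1 < n := by omega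
      have heq' : Pj n i j = Pj n i' j' := heq
      have key : ∀ u v : Fin n, Pj n i j u v → Pj n i' j' u v := by
        intro u v h; rw [← heq']; exact h
      rcases hj with rfl | rfl | rfl <;> rcases hj' with rfl | rfl | rfl <;>
        simp only [Prod.mk.injEq]
      · have h := key ⟨2*i, hia⟩ ⟨2*i+1, hib⟩ (by simp [Pj])
        first
        | (simp [Pj] at h; omega)
        | (simp [Pj] at h; exact ⟨by omega, trivial⟩)
        | simp [Pj] at h
      · have h := key ⟨2*i, hia⟩ ⟨2*i+1, hib⟩ (by simp [Pj])
        first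
        | (simp [Pj] at h; omega)
        | (simp [Pj] at h; exact ⟨by omega, trivial⟩)
        | simp [Pj] at h
      · have h := key ⟨2*i, hia⟩ ⟨2*i+1, hib⟩ (by simp [Pj])
        first
        | (simp [Pj] at h; omega)
        | (simp [Pj] at h; exact ⟨by omega, trivial⟩)
        | simp [Pj] at h
      · have h := key ⟨0, by omega⟩ ⟨2*i, hia⟩ (by simp [Pj])
        first
        | (simp [Pj] at h; omega)
        | (simp [Pj] at h; exact ⟨by omega, trivial⟩)
        | simp [Pj] at h
      · have h := key ⟨0, by omega⟩ ⟨2*i, hia⟩ (by simp [Pj])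
        first
        | (simp [Pj] at h; omega)
        | (simp [Pj] at h; exact ⟨by omega, trivial⟩)
        | simp [Pj] at h
      · have h := key ⟨0, by omega⟩ ⟨2*i, hia⟩ (by simp [Pj])
        first
        | (simp [Pj] at h; omega)
        | (simp [Pj] at h; exact ⟨by omega, trivial⟩)
        | simp [Pj] at h
      · have h := key ⟨2*i, hia⟩ ⟨1, by omega⟩ (by simp [Pj])
        first
        | (simp [Pj] at h; omega)
        | (simp [Pj] at h; exact ⟨by omega, trivial⟩)
        | simp [Pj] at h
      · have h := key ⟨2*i, hia⟩ ⟨1, by omega⟩ (by simp [Pj])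
        first
        | (simp [Pj] at h; omega)
        | (simp [Pj] at h; exact ⟨by omega, trivial⟩)
        | simp [Pj] at h
      · have h := key ⟨2*i, hia⟩ ⟨1, by omega⟩ (by simp [Pj])
        first
        | (simp [Pj] at h; omega)
        | (simp [Pj] at h; exact ⟨by omega, trivial⟩)
        | simp [Pj] at h
    rw [Set.ncard_image_of_injOn hinj]
    have : (Set.Ico 1 k ×ˢ ({0, 1, 2} : Set ℕ)) =
        ↑((Finset.Ico 1 k) ×ˢ ({0, 1, 2} : Finset ℕ)) := by
      simp
    rw [this, Set.ncard_coe_finset, Finset.card_product, Nat.card_Ico]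
    simp
    omega
  · -- shattering
    intro A hA
    set c1 : ℕ → Bool := fun i => decide (Pj n i 0 ∈ A) with hc1
    set c2 : ℕ → Bool := fun i => decide (Pj n i 1 ∈ A) with hc2
    set c3 : ℕ → Bool := fun i => decide (Pj n i 2 ∈ A) with hc3
    set ρ : ℕ → ℕ := rk n k c1 c2 c3 with hρ
    have hn0 : 0 < n := by omega
    refine ⟨fun u v : Fin n => ρ u < ρ v, ?_, ?_⟩
    · refine ⟨fun a h => lt_irrefl _ h, fun a b c h h' => h.trans h', ?_⟩
      intro a b hab
      have hne : ρ ↑a ≠ ρ ↑b := by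
        intro h
        exact hab (Fin.ext (rk_inj n k c1 c2 c3 a.isLt b.isLt h))
      omega
    · have hTirr : Irreflexive (fun u v : Fin n => ρ u < ρ v) := fun a h => lt_irrefl _ h
      have hTtrans : Transitive (fun u v : Fin n => ρ u < ρ v) :=
        fun a b c h h' => h.trans h'
      have hTtot : ∀ a b : Fin n, a ≠ b → ρ ↑a < ρ ↑b ∨ ρ ↑b < ρ ↑a := by
        intro a b hab
        have hne : ρ ↑a ≠ ρ ↑b := by
          intro h
          exact hab (Fin.ext (rk_inj n k c1 c2 c3 a.isLt b.isLt h))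
        omega
      -- the crucial equivalence
      have main : ∀ i j : ℕ, 1 ≤ i → i < k → j ∈ ({0,1,2} : Set ℕ) →
          (OrdCompat (fun u v : Fin n => ρ u < ρ v) (Pj n i j) ↔ Pj n i j ∈ A) := by
        intro i j hi1 hik hj
        have hia : 2*i < n := by omega
        have hib : 2*i+1 < n := by omega
        have key := rk_key n k hk c1 c2 c3 i hi1 hik
        rw [compat_iff hTirr hTtrans hTtot]
        simp only [Set.mem_insert_iff, Set.mem_singleton_iff] at hj
        rcases hj with rfl | rfl | rfl
        · rw [show (∀ u v : Fin n, Pj n i 0 u v → ρ ↑u < ρ ↑v) ↔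
              (ρ (2*i) < ρ (2*i+1)) from ?_]
          · rw [key.1, hc1]; simp
          · constructor
            · intro h
              exact h ⟨2*i, hia⟩ ⟨2*i+1, hib⟩ (by simp [Pj])
            · intro h u v huv
              simp only [Pj, if_pos rfl] at huv
              show ρ ↑u < ρ ↑v
              rw [huv.1, huv.2]; exact h
        · rw [show (∀ u v : Fin n, Pj n i 1 u v → ρ ↑u < ρ ↑v) ↔
              (ρ 0 < ρ (2*i) ∧ ρ 0 < ρ (2*i+1)) from ?_]
          · rw [key.2.1, hc2]; simp
          · constructor
            · intro h
              exact ⟨h ⟨0, by omega⟩ ⟨2*i, hia⟩ (by simp [Pj]),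
                h ⟨0, by omega⟩ ⟨2*i+1, hib⟩ (by simp [Pj])⟩
            · intro h u v huv
              simp only [Pj, if_neg (by omega : ¬(1:ℕ) = 0), if_pos rfl] at huv
              show ρ ↑u < ρ ↑v
              rcases huv with ⟨hu, hv | hv⟩ <;> rw [hu, hv]
              · exact h.1
              · exact h.2
        · rw [show (∀ u v : Fin n, Pj n i 2 u v → ρ ↑u < ρ ↑v) ↔
              (ρ (2*i) < ρ 1 ∧ ρ (2*i+1) < ρ 1) from ?_]
          · rw [key.2.2, hc3]; simp
          · constructor
            · intro h
              exact ⟨h ⟨2*i, hia⟩ ⟨1, by omega⟩ (by simp [Pj]),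
                h ⟨2*i+1, hib⟩ ⟨1, by omega⟩ (by simp [Pj])⟩
            · intro h u v huv
              simp only [Pj, if_neg (by omega : ¬(2:ℕ) = 0),
                if_neg (by omega : ¬(2:ℕ) = 1)] at huv
              show ρ ↑u < ρ ↑v
              rcases huv with ⟨hu | hu, hv⟩ <;> rw [hu, hv]
              · exact h.1
              · exact h.2
      ext r
      simp only [Set.mem_setOf_eq]
      constructor
      · rintro ⟨⟨⟨i, j⟩, ⟨hi, hj⟩, rfl⟩, hcompat⟩
        simp only [Set.mem_Ico] at hi
        exact (main i j hi.1 hi.2 hj).1 hcompat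
      · intro hrA
        have hrS := hA hrA
        refine ⟨hrS, ?_⟩
        obtain ⟨⟨i, j⟩, ⟨hi, hj⟩, rfl⟩ := hrS
        simp only [Set.mem_Ico] at hi
        exact (main i j hi.1 hi.2 hj).2 hrA
end

section
/- For n ≥ 4, the VC-dimension of the family of partial orders on [n], viewed as a set family over the total orders on [n] via compatibility, equals ⌊n²/4⌋. -/
open Finset

private lemma mantel_arith (k : ℕ) : k ^ 2 / 4 + (k + 1) = (k + 2) ^ 2 / 4 := by
  have h : (k + 2) ^ 2 = k ^ 2 + (k + 1) * 4 := by ring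
  rw [h, Nat.add_mul_div_right _ _ (by norm_num)]

/-- Mantel's theorem for sets of directed pairs. -/
lemma mantel_pairs {α : Type*} [DecidableEq α] :
    ∀ (m : ℕ) (s : Finset α) (D : Finset (α × α)), s.card = m →
    (∀ p ∈ D, p.1 ∈ s ∧ p.2 ∈ s) →
    (∀ p ∈ D, p.1 ≠ p.2) →
    (∀ p ∈ D, (p.2, p.1) ∉ D) →
    (∀ a b c : α, a ≠ b → a ≠ c → b ≠ c →
      ((a,b) ∈ D ∨ (b,a) ∈ D) → ((b,c) ∈ D ∨ (c,b) ∈ D) → ((a,c) ∈ D ∨ (c,a) ∈ D) → False) →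
    D.card ≤ m ^ 2 / 4 := by
  intro m
  induction m using Nat.strong_induction_on with
  | _ m ih =>
    intro s D hcard hmem hne hanti htf
    rcases D.eq_empty_or_nonempty with rfl | ⟨⟨u, v⟩, huv⟩
    · simp
    have hu : u ∈ s := (hmem _ huv).1
    have hv : v ∈ s := (hmem _ huv).2
    have hune : u ≠ v := hne _ huv
    have hm2 : 2 ≤ m := by
      rw [← hcard]
      have hsub : ({u, v} : Finset α) ⊆ s := by
        intro x hx; simp at hx; rcases hx with rfl | rfl <;> assumption
      calc 2 = ({u, v} : Finset α).card := by
              rw [card_insert_of_notMem (by simpa), card_singleton]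
        _ ≤ s.card := card_le_card hsub
    set s' : Finset α := (s.erase u).erase v with hs'
    have hs'card : s'.card = m - 2 := by
      rw [hs', card_erase_of_mem (mem_erase.2 ⟨Ne.symm hune, hv⟩), card_erase_of_mem hu, hcard]
      omega
    have hws' : ∀ w ∈ s', w ≠ u ∧ w ≠ v := by
      intro w hw
      simp only [hs', mem_erase] at hw
      exact ⟨hw.2.1, hw.1⟩
    classical
    set D' : Finset (α × α) := D.filter (fun p => p.1 ∈ s' ∧ p.2 ∈ s') with hD'
    have hD'sub : D' ⊆ D := filter_subset _ _
    -- structure of pairs outside D'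
    have hstruct : ∀ p ∈ (D \ D').erase (u, v),
        ∃ w ∈ s', ((p = (u, w) ∨ p = (w, u)) ∨ (p = (v, w) ∨ p = (w, v))) := by
      rintro ⟨a, b⟩ hp
      rw [mem_erase] at hp
      obtain ⟨hpne, hp⟩ := hp
      simp only [mem_sdiff, hD', mem_filter, not_and] at hp
      obtain ⟨hpD, hp'⟩ := hp
      have hmema := (hmem _ hpD).1
      have hmemb := (hmem _ hpD).2
      have habne : a ≠ b := hne _ hpD
      have hnotboth : ¬ (a ∈ s' ∧ b ∈ s') := fun h => hp' hpD h.1 h.2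
      have key : ∀ x : α, x ∈ s → x ∉ s' → x = u ∨ x = v := by
        intro x hxs hxs'
        by_contra hc
        push_neg at hc
        exact hxs' (by simp only [hs', mem_erase]; exact ⟨hc.2, hc.1, hxs⟩)
      by_cases ha : a ∈ s'
      · have hb : b ∉ s' := fun h => hnotboth ⟨ha, h⟩
        rcases key b hmemb hb with rfl | rfl
        · exact ⟨a, ha, Or.inl (Or.inr rfl)⟩
        · exact ⟨a, ha, Or.inr (Or.inr rfl)⟩
      · rcases key a hmema ha with rfl | rfl
        · have hbv : b ≠ v := fun h => hpne (by rw [h])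
          have hbs' : b ∈ s' := by
            simp only [hs', mem_erase]
            exact ⟨hbv, Ne.symm habne, hmemb⟩
          exact ⟨b, hbs', Or.inl (Or.inl rfl)⟩
        · have hbu : b ≠ u := by
            rintro rfl
            exact hanti _ huv hpD
          have hbs' : b ∈ s' := by
            simp only [hs', mem_erase]
            exact ⟨Ne.symm habne, hbu, hmemb⟩
          exact ⟨b, hbs', Or.inr (Or.inl rfl)⟩
    -- the "other endpoint" map
    set φ : α × α → α := fun p => if p.1 = u ∨ p.1 = v then p.2 else p.1 with hφ
    have hφval : ∀ p ∈ (D \ D').erase (u, v), ∃ w ∈ s', φ p = w ∧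
        ((p = (u, w) ∨ p = (w, u)) ∨ (p = (v, w) ∨ p = (w, v))) := by
      intro p hp
      obtain ⟨w, hw, hcases⟩ := hstruct p hp
      refine ⟨w, hw, ?_, hcases⟩
      obtain ⟨hwu, hwv⟩ := hws' w hw
      rcases hcases with (rfl | rfl) | (rfl | rfl) <;> simp [hφ, hwu, hwv, hune, Ne.symm hune]
    have hinj : Set.InjOn φ ((D \ D').erase (u, v) : Finset (α × α)) := by
      intro p hp q hq hpq
      simp only [Finset.mem_coe] at hp hq
      obtain ⟨w, hw, hφp, hcp⟩ := hφval p hp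
      obtain ⟨w', hw', hφq, hcq⟩ := hφval q hq
      have hww : w = w' := by rw [← hφp, ← hφq, hpq]
      subst hww
      obtain ⟨hwu, hwv⟩ := hws' w hw
      have hpD : p ∈ D := (mem_sdiff.1 (mem_of_mem_erase hp)).1
      have hqD : q ∈ D := (mem_sdiff.1 (mem_of_mem_erase hq)).1
      by_contra hne'
      -- same x gives antisymmetry violation; different x gives a triangle
      rcases hcp with (rfl | rfl) | (rfl | rfl) <;>
        rcases hcq with (rfl | rfl) | (rfl | rfl) <;>
        first
          | exact hne' rfl
          | exact hanti _ hpD (by simpa using hqD)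
          | exact htf u v w hune (Ne.symm hwu) (Ne.symm hwv) (Or.inl huv)
              (by first | exact Or.inl hqD | exact Or.inr hqD | exact Or.inl hpD | exact Or.inr hpD)
              (by first | exact Or.inl hpD | exact Or.inr hpD | exact Or.inl hqD | exact Or.inr hqD)
    have hcard1 : ((D \ D').erase (u, v)).card ≤ s'.card := by
      have himg : ((D \ D').erase (u, v)).image φ ⊆ s' := by
        intro w hw
        rw [mem_image] at hw
        obtain ⟨p, hp, rfl⟩ := hw
        obtain ⟨w', hw', hφp, _⟩ := hφval p hp
        rwa [hφp]
      calc ((D \ D').erase (u, v)).card = (((D \ D').erase (u, v)).image φ).card :=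
            (Finset.card_image_of_injOn hinj).symm
        _ ≤ s'.card := card_le_card himg
    have hcard2 : (D \ D').card ≤ s'.card + 1 := by
      have := Finset.card_erase_add_one (show (u,v) ∈ D \ D' from ?_)
      · omega
      · rw [mem_sdiff]
        refine ⟨huv, ?_⟩
        simp only [hD', mem_filter]
        rintro ⟨-, h1, -⟩
        exact (hws' u h1).1 rfl
    have hih : D'.card ≤ (m - 2) ^ 2 / 4 := by
      refine ih (m - 2) (by omega) s' D' hs'card ?_ ?_ ?_ ?_
      · intro p hp
        simp only [hD', mem_filter] at hp
        exact hp.2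
      · intro p hp; exact hne p (hD'sub hp)
      · intro p hp h
        exact hanti p (hD'sub hp) (hD'sub h)
      · intro a b c h1 h2 h3 e1 e2 e3
        exact htf a b c h1 h2 h3 (e1.imp (hD'sub ·) (hD'sub ·))
          (e2.imp (hD'sub ·) (hD'sub ·)) (e3.imp (hD'sub ·) (hD'sub ·))
    have hsplit : D.card = D'.card + (D \ D').card := by
      rw [← Finset.card_sdiff_add_card_eq_card hD'sub, Nat.add_comm]
    have harith := mantel_arith (m - 2)
    have : m - 2 + 2 = m := by omega
    rw [this] at harith
    omega

/-- If `P ⊆ T` and `T` is a strict order, they are compatible. -/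
lemma compat_of_subset {α : Type*} {P T : α → α → Prop} (hTi : Irreflexive T)
    (hTt : Transitive T) (h : ∀ a b, P a b → T a b) : OrdCompat P T := by
  intro a ha
  have : Relation.TransGen T a a := Relation.TransGen.mono (fun x y hxy => hxy.elim (h x y) id) a a ha
  rw [haveI : IsTrans α T := ⟨fun _ _ _ h1 h2 => hTt h1 h2⟩; Relation.transGen_eq_self] at this
  exact hTi a this

/-- A two-step cycle shows incompatibility. -/
lemma not_compat_of_cycle {α : Type*} {P T : α → α → Prop} {x y : α}
    (h1 : P x y) (h2 : T y x) : ¬ OrdCompat P T := by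
  intro hc
  exact hc x (Relation.TransGen.head (Or.inl h1) (Relation.TransGen.single (Or.inr h2)))

lemma total_cycle_false {n : ℕ} {T : Fin n → Fin n → Prop} (hT : T ∈ TotalOrds n)
    {a b : Fin n} (h1 : T a b) (h2 : T b a) : False :=
  hT.1 a (hT.2.1 h1 h2)

/-- Extraction of critical pairs from a shattered set. -/
lemma critical_pairs {n : ℕ} {S : Set (Fin n → Fin n → Prop)} (hsub : S ⊆ TotalOrds n)
    (hsh : ShattersVia (PartialOrds n) OrdCompat S) :
    ∀ T ∈ S, ∃ u v : Fin n, u ≠ v ∧ T v u ∧ ∀ T' ∈ S, T' ≠ T → T' u v := by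
  intro T hT
  obtain ⟨P, hP, heq⟩ := hsh (S \ {T}) Set.diff_subset
  have hTtot := hsub hT
  have hnc : ¬ OrdCompat P T := by
    intro hc
    have : T ∈ S \ {T} := heq ▸ Set.mem_sep hT hc
    exact this.2 rfl
  have hPsub : ¬ ∀ a b, P a b → T a b := fun h => hnc (compat_of_subset hTtot.1 hTtot.2.1 h)
  push_neg at hPsub
  obtain ⟨u, v, hPuv, hnTuv⟩ := hPsub
  have hune : u ≠ v := by rintro rfl; exact hP.1 u hPuv
  have hTvu : T v u := (hTtot.2.2 u v hune).resolve_left hnTuv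
  refine ⟨u, v, hune, hTvu, ?_⟩
  intro T' hT' hne
  have hc : OrdCompat P T' := by
    have : T' ∈ S \ {T} := ⟨hT', hne⟩
    rw [← heq] at this
    exact this.2
  have hT'tot := hsub hT'
  by_contra hnT'
  have hT'vu : T' v u := ((hT'tot.2.2 u v hune).resolve_left hnT')
  exact not_compat_of_cycle hPuv hT'vu hc

/-- Upper bound. -/
lemma upper_bound {n : ℕ} (hn : 4 ≤ n) (S : Set (Fin n → Fin n → Prop))
    (hsub : S ⊆ TotalOrds n) (hsh : ShattersVia (PartialOrds n) OrdCompat S) :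
    S.Finite ∧ S.ncard ≤ n ^ 2 / 4 := by
  classical
  haveI : Nonempty (Fin n) := ⟨⟨0, by omega⟩⟩
  choose! u v hune hTvu hother using critical_pairs hsub hsh
  set f : (Fin n → Fin n → Prop) → Fin n × Fin n := fun T => (u T, v T) with hf
  have hinj : Set.InjOn f S := by
    intro T hT T' hT' hEq
    by_contra hne
    simp only [hf, Prod.mk.injEq] at hEq
    have h1 : T' (u T) (v T) := hother T hT T' hT' (fun h => hne h.symm)
    have h2 : T' (v T) (u T) := by rw [hEq.1, hEq.2]; exact hTvu T' hT'
    exact total_cycle_false (hsub hT') h1 h2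
  have hfin : S.Finite := Set.Finite.of_finite_image (Set.toFinite _) hinj
  refine ⟨hfin, ?_⟩
  by_cases hsmall : S.ncard ≤ 4
  · refine le_trans hsmall ?_
    have : 16 ≤ n ^ 2 := by nlinarith
    calc 4 = 16 / 4 := by norm_num
      _ ≤ n ^ 2 / 4 := Nat.div_le_div_right this
  push_neg at hsmall
  -- now S.ncard ≥ 5
  set F := hfin.toFinset with hF
  have hFS : ∀ T, T ∈ F ↔ T ∈ S := fun T => hfin.mem_toFinset
  set D : Finset (Fin n × Fin n) := F.image f with hD
  have hDmem : ∀ p ∈ D, ∃ T ∈ S, u T = p.1 ∧ v T = p.2 := by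
    intro p hp
    rw [hD, Finset.mem_image] at hp
    obtain ⟨T, hT, rfl⟩ := hp
    exact ⟨T, (hFS T).1 hT, rfl, rfl⟩
  have hcardD : D.card = S.ncard := by
    rw [hD, Finset.card_image_of_injOn (by simpa [hFS, Set.InjOn] using hinj),
      Set.ncard_eq_toFinset_card S hfin]
  -- third element helper
  have hthird : ∀ T T' : Fin n → Fin n → Prop, ∃ T'' ∈ S, T'' ≠ T ∧ T'' ≠ T' := by
    intro T T'
    by_contra hc
    push_neg at hc
    have hsub2 : S ⊆ {T, T'} := by
      intro x hx
      by_cases h : x = T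
      · exact Or.inl h
      · exact Or.inr (hc x hx h)
    have := Set.ncard_le_ncard hsub2 (Set.toFinite _)
    have h2 : ({T, T'} : Set _).ncard ≤ 2 := (Set.ncard_insert_le _ _).trans (by simp)
    omega
  -- fourth element helper
  have hfourth : ∀ T1 T2 T3 : Fin n → Fin n → Prop,
      ∃ T4 ∈ S, T4 ≠ T1 ∧ T4 ≠ T2 ∧ T4 ≠ T3 := by
    intro T1 T2 T3
    by_contra hc
    push_neg at hc
    have : S ⊆ {T1, T2, T3} := by
      intro x hx
      by_contra h
      simp only [Set.mem_insert_iff, Set.mem_singleton_iff, not_or] at h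
      rcases hc x hx h.1 h.2.1 with h3
      exact h.2.2 h3
    have := Set.ncard_le_ncard this (Set.toFinite _)
    have h2 : ({T1, T2, T3} : Set _).ncard ≤ 3 :=
      (Set.ncard_insert_le _ _).trans (by
        have := Set.ncard_insert_le T2 ({T3} : Set _)
        simp at this ⊢
        omega)
    omega
  -- the directed relation
  have hR : ∀ p q : Fin n, ((p, q) ∈ D) → ∃ T ∈ S, u T = p ∧ v T = q := by
    intro p q hpq; exact hDmem _ hpq
  -- transitive triangle impossible
  have htrans3 : ∀ p q r : Fin n, q ≠ p → q ≠ r →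
      (p, q) ∈ D → (q, r) ∈ D → (p, r) ∈ D → False := by
    intro p q r hqp hqr h1 h2 h3
    obtain ⟨T1, hT1, hu1, hv1⟩ := hR _ _ h1
    obtain ⟨T2, hT2, hu2, hv2⟩ := hR _ _ h2
    obtain ⟨T3, hT3, hu3, hv3⟩ := hR _ _ h3
    have h31 : T3 ≠ T1 := by
      rintro rfl; exact hqr (by rw [← hv1, ← hv3])
    have h32 : T3 ≠ T2 := by
      rintro rfl; exact hqp (by rw [← hu2, ← hu3])
    have e1 : T3 p q := by rw [← hu1, ← hv1]; exact hother T1 hT1 T3 hT3 h31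
    have e2 : T3 q r := by rw [← hu2, ← hv2]; exact hother T2 hT2 T3 hT3 h32
    have e3 : T3 r p := by rw [← hu3, ← hv3]; exact hTvu T3 hT3
    have htot := hsub hT3
    exact htot.1 p (htot.2.1 (htot.2.1 e1 e2) e3)
  -- cyclic triangle impossible
  have hcyc3 : ∀ p q r : Fin n, p ≠ q → q ≠ r → p ≠ r →
      (p, q) ∈ D → (q, r) ∈ D → (r, p) ∈ D → False := by
    intro p q r hpq hqr hpr h1 h2 h3
    obtain ⟨T1, hT1, hu1, hv1⟩ := hR _ _ h1
    obtain ⟨T2, hT2, hu2, hv2⟩ := hR _ _ h2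
    obtain ⟨T3, hT3, hu3, hv3⟩ := hR _ _ h3
    obtain ⟨T4, hT4, hn1, hn2, hn3⟩ := hfourth T1 T2 T3
    have e1 : T4 p q := by rw [← hu1, ← hv1]; exact hother T1 hT1 T4 hT4 hn1
    have e2 : T4 q r := by rw [← hu2, ← hv2]; exact hother T2 hT2 T4 hT4 hn2
    have e3 : T4 r p := by rw [← hu3, ← hv3]; exact hother T3 hT3 T4 hT4 hn3
    have htot := hsub hT4
    exact htot.1 p (htot.2.1 (htot.2.1 e1 e2) e3)
  have hbound := mantel_pairs n Finset.univ D (by simp) (by intro p _; simp) ?_ ?_ ?_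
  · rw [hcardD] at hbound
    simpa using hbound
  · -- irreflexive
    intro p hp
    obtain ⟨T, hT, hu1, hv1⟩ := hDmem _ hp
    rw [← hu1, ← hv1]
    exact hune T hT
  · -- antisymmetric
    intro p hp hrev
    obtain ⟨T, hT, hu1, hv1⟩ := hDmem _ hp
    obtain ⟨T', hT', hu2, hv2⟩ := hDmem _ hrev
    simp only at hu2 hv2
    obtain ⟨T'', hT'', h1, h2⟩ := hthird T T'
    have e1 : T'' p.1 p.2 := by rw [← hu1, ← hv1]; exact hother T hT T'' hT'' h1
    have e2 : T'' p.2 p.1 := by rw [← hu2, ← hv2]; exact hother T' hT' T'' hT'' h2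
    exact total_cycle_false (hsub hT'') e1 e2
  · -- triangle-free
    intro a b c hab hac hbc e1 e2 e3
    rcases e1 with e1 | e1 <;> rcases e2 with e2 | e2 <;> rcases e3 with e3 | e3
    · exact htrans3 a b c (Ne.symm hab) hbc e1 e2 e3
    · exact hcyc3 a b c hab hbc (hac) e1 e2 e3
    · exact htrans3 a c b (Ne.symm hac) (Ne.symm hbc) e3 e2 e1
    · exact htrans3 c a b hac hab e3 e1 e2
    · exact htrans3 b a c hab hac e1 e3 e2
    · exact htrans3 b c a (Ne.symm hbc) (Ne.symm hac) e2 e3 e1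
    · exact hcyc3 a c b hac (Ne.symm hbc) hab e3 e2 e1
    · exact htrans3 c b a hbc (Ne.symm hab) e2 e1 e3

section Lower

open Finset

variable {n : ℕ}

/-- Ranking function for the total order `T x y`: X\{x} first (natural order),
then y, then x, then Y\{y} (natural order). -/
def frk (n : ℕ) (x y a : Fin n) : ℕ :=
  if a = x then n + 1 else if a = y then n else if a.val < n / 2 then a.val else n + 2 + a.val

/-- The total order associated to a pair. -/
def Tord (x y : Fin n) : Fin n → Fin n → Prop := fun a b => frk n x y a < frk n x y b

lemma frk_lt_trichotomy {x y : Fin n} (hx : x.val < n / 2) (hy : n / 2 ≤ y.val)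
    {a b : Fin n} (hab : a ≠ b) : frk n x y a ≠ frk n x y b := by
  have hxy : x ≠ y := by intro h; rw [h] at hx; omega
  unfold frk
  have hb2 := b.isLt
  have ha2 := a.isLt
  have hd : n / 2 ≤ n := Nat.div_le_self n 2
  have hvne : a.val ≠ b.val := fun h => hab (Fin.ext h)
  have hx2 := x.isLt
  have hy2 := y.isLt
  split_ifs <;> simp_all [Fin.ext_iff] <;> omega

lemma Tord_total {x y : Fin n} (hx : x.val < n / 2) (hy : n / 2 ≤ y.val) :
    Tord x y ∈ TotalOrds n := by
  refine ⟨fun a h => lt_irrefl _ h, fun a b c h1 h2 => lt_trans h1 h2, fun a b hab => ?_⟩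
  rcases lt_or_gt_of_ne (frk_lt_trichotomy hx hy hab) with h | h
  · exact Or.inl h
  · exact Or.inr h

/-- `Tord x y` puts `y` before `x`. -/
lemma Tord_own {x y : Fin n} (hx : x.val < n / 2) (hy : n / 2 ≤ y.val) :
    Tord x y y x := by
  have hxy : y ≠ x := by intro h; rw [← h] at hx; omega
  unfold Tord frk
  simp [hxy]

/-- `Tord x' y'` puts `x` before `y` for any valid pair `(x, y) ≠ (x', y')`. -/
lemma Tord_other {x y x' y' : Fin n} (hx : x.val < n / 2) (hy : n / 2 ≤ y.val)
    (hx' : x'.val < n / 2) (hy' : n / 2 ≤ y'.val) (hne : (x, y) ≠ (x', y')) :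
    Tord x' y' x y := by
  have hxy' : x ≠ y' := by intro h; rw [h] at hx; omega
  have hyx' : y ≠ x' := by intro h; rw [h] at hy; omega
  unfold Tord frk
  by_cases hxx : x = x'
  · subst hxx
    have hyy : y ≠ y' := by
      intro h; exact hne (by rw [h])
    have hynlt : ¬ y.val < n / 2 := by omega
    rw [if_pos rfl, if_neg hyx', if_neg hyy, if_neg hynlt]
    omega
  · simp only [if_neg hxx, if_neg hxy', if_pos hx, if_neg hyx']
    have hd : n / 2 ≤ n := Nat.div_le_self n 2
    by_cases hyy : y = y'
    · simp only [if_pos hyy]; omega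
    · simp only [if_neg hyy]
      have : ¬ y.val < n / 2 := by omega
      simp only [if_neg this]
      omega

/-- Valid pairs. -/
def vpairs (n : ℕ) : Finset (Fin n × Fin n) :=
  Finset.univ.filter (fun p => p.1.val < n / 2 ∧ n / 2 ≤ p.2.val)

lemma mem_vpairs {p : Fin n × Fin n} : p ∈ vpairs n ↔ p.1.val < n / 2 ∧ n / 2 ≤ p.2.val := by
  simp [vpairs]

lemma vpairs_card (hn : 1 ≤ n) : (vpairs n).card = (n / 2) * (n - n / 2) := by
  classical
  have hlt : n / 2 < n := by omega
  have h : vpairs n = (Finset.univ.filter (fun a : Fin n => a.val < n / 2)) ×ˢ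
      (Finset.univ.filter (fun a : Fin n => n / 2 ≤ a.val)) := by
    ext p
    simp [vpairs, Finset.mem_product]
  rw [h, Finset.card_product]
  congr 1
  · have h2 : (Finset.univ.filter (fun a : Fin n => a.val < n / 2)) =
        Finset.Iio (⟨n / 2, hlt⟩ : Fin n) := by
      ext a
      simp [Finset.mem_Iio, Fin.lt_def]
    rw [h2, Fin.card_Iio]
  · have h2 : (Finset.univ.filter (fun a : Fin n => n / 2 ≤ a.val)) =
        Finset.Ici (⟨n / 2, hlt⟩ : Fin n) := by
      ext a
      simp [Finset.mem_Ici, Fin.le_def]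
    rw [h2, Fin.card_Ici]

end Lower

section Lower2

open Finset

variable {n : ℕ}

lemma Tord_asymm {x y : Fin n} {a b : Fin n} (h1 : Tord x y a b) (h2 : Tord x y b a) : False :=
  lt_asymm h1 h2

lemma Tord_injOn {x y x' y' : Fin n} (hx : x.val < n / 2) (hy : n / 2 ≤ y.val)
    (hx' : x'.val < n / 2) (hy' : n / 2 ≤ y'.val) (hne : (x, y) ≠ (x', y')) :
    Tord x y ≠ Tord x' y' := by
  intro h
  have h1 : Tord x' y' x y := Tord_other hx hy hx' hy' hne
  rw [← h] at h1
  exact Tord_asymm h1 (Tord_own hx hy)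

/-- The shattered family of total orders. -/
def lowS (n : ℕ) : Set (Fin n → Fin n → Prop) :=
  ↑((vpairs n).image (fun p => Tord p.1 p.2))

lemma mem_lowS {T : Fin n → Fin n → Prop} :
    T ∈ lowS n ↔ ∃ x y : Fin n, x.val < n / 2 ∧ n / 2 ≤ y.val ∧ Tord x y = T := by
  simp only [lowS, Finset.mem_coe, Finset.mem_image]
  constructor
  · rintro ⟨⟨x, y⟩, hp, rfl⟩
    exact ⟨x, y, (mem_vpairs.1 hp).1, (mem_vpairs.1 hp).2, rfl⟩
  · rintro ⟨x, y, h1, h2, rfl⟩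
    exact ⟨(x, y), mem_vpairs.2 ⟨h1, h2⟩, rfl⟩

lemma lowS_subset : lowS n ⊆ TotalOrds n := by
  intro T hT
  obtain ⟨x, y, h1, h2, rfl⟩ := mem_lowS.1 hT
  exact Tord_total h1 h2

lemma div_arith (n : ℕ) : n / 2 * (n - n / 2) = n ^ 2 / 4 := by
  rcases Nat.even_or_odd n with ⟨m, rfl⟩ | ⟨m, rfl⟩
  · have h0 : (m + m) / 2 = m := by omega
    have h1 : m + m - m = m := by omega
    rw [h0, h1]
    have h2 : (m + m) ^ 2 = m * m * 4 := by ring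
    rw [h2, Nat.mul_div_cancel _ (by norm_num)]
  · have h0 : (2 * m + 1) / 2 = m := by omega
    have h1 : 2 * m + 1 - m = m + 1 := by omega
    rw [h0, h1]
    have h2 : (2 * m + 1) ^ 2 = m * (m + 1) * 4 + 1 := by ring
    rw [h2]
    omega

lemma lowS_ncard (hn : 4 ≤ n) : (lowS n).ncard = n ^ 2 / 4 := by
  rw [lowS, Set.ncard_coe_finset, Finset.card_image_of_injOn, vpairs_card (by omega), div_arith]
  rintro ⟨x, y⟩ hp ⟨x', y'⟩ hq hpq
  by_contra hne
  rw [Finset.mem_coe, mem_vpairs] at hp hq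
  exact Tord_injOn hp.1 hp.2 hq.1 hq.2 hne hpq

lemma lowS_shattered (hn : 4 ≤ n) : ShattersVia (PartialOrds n) OrdCompat (lowS n) := by
  intro A hA
  rcases A.eq_empty_or_nonempty with rfl | ⟨T₀, hT₀⟩
  · -- the reversed order is compatible with no member
    refine ⟨fun a b => b < a, ⟨fun a h => lt_irrefl a h, fun a b c h1 h2 => lt_trans h2 h1⟩, ?_⟩
    rw [Set.eq_empty_iff_forall_notMem]
    rintro T ⟨hTS, hc⟩
    obtain ⟨x, y, hx, hy, rfl⟩ := mem_lowS.1 hTS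
    have hn2 : 2 ≤ n / 2 := by omega
    set x' : Fin n := if x.val = 0 then ⟨1, by omega⟩ else ⟨0, by omega⟩ with hx'def
    have hx'lt : x'.val < n / 2 := by
      rw [hx'def]; split_ifs <;> simp <;> omega
    have hx'ne : x' ≠ x := by
      rw [hx'def]
      split_ifs with h
      · intro hc2; rw [← hc2] at h; simp at h
      · intro hc2; rw [← hc2] at h; simp at h
    have hTx'y : Tord x y x' y :=
      Tord_other hx'lt hy hx hy (by
        intro h
        exact hx'ne (congrArg Prod.fst h))
    have hByx' : ((fun a b : Fin n => b < a) : Fin n → Fin n → Prop) y x' := by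
      show x' < y
      rw [Fin.lt_def]
      omega
    exact not_compat_of_cycle (P := fun a b : Fin n => b < a) hByx' hTx'y hc
  · -- intersection of the members of A
    have hAtot : ∀ T ∈ A, T ∈ TotalOrds n := fun T hT => lowS_subset (hA hT)
    refine ⟨fun a b => ∀ T' ∈ A, T' a b, ⟨fun a h => (hAtot T₀ hT₀).1 a (h T₀ hT₀),
      fun a b c h1 h2 T' hT' => (hAtot T' hT').2.1 (h1 T' hT') (h2 T' hT')⟩, ?_⟩
    ext T
    simp only [Set.mem_setOf_eq]
    constructor
    · rintro ⟨hTS, hc⟩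
      by_contra hTA
      obtain ⟨x, y, hx, hy, rfl⟩ := mem_lowS.1 hTS
      have hBxy : ∀ T' ∈ A, T' x y := by
        intro T' hT'
        obtain ⟨x', y', hx', hy', rfl⟩ := mem_lowS.1 (hA hT')
        refine Tord_other hx hy hx' hy' ?_
        intro h
        apply hTA
        rw [Prod.mk.injEq] at h
        rw [h.1, h.2]
        exact hT'
      exact absurd hc (not_compat_of_cycle hBxy (Tord_own hx hy))
    · intro hTA
      have hTtot := hAtot T hTA
      exact ⟨hA hTA, compat_of_subset hTtot.1 hTtot.2.1 (fun a b h => h T hTA)⟩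

end Lower2

theorem stmt7 {n : ℕ} (hn : 4 ≤ n) :
    (∃ S ⊆ TotalOrds n, S.Finite ∧ S.ncard = n ^ 2 / 4 ∧
      ShattersVia (PartialOrds n) OrdCompat S) ∧
    (∀ S ⊆ TotalOrds n, ShattersVia (PartialOrds n) OrdCompat S →
      S.Finite ∧ S.ncard ≤ n ^ 2 / 4) := by
  constructor
  · exact ⟨lowS n, lowS_subset, Finset.finite_toSet _, lowS_ncard hn, lowS_shattered hn⟩
  · intro S hsub hsh
    exact upper_bound hn S hsub hsh
end

section
/- For n ≥ 4, the VC-dimension of the family of partial orders on [n] over the total orders on [n] (via compatibility) is at most ⌊n²/4⌋. -/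
/- ### Auxiliary lemmas -/

open Finset

lemma transGen_le_of_trans {α : Type*} {r s : α → α → Prop} (hs : Transitive s)
    (h : ∀ a b, r a b → s a b) : ∀ a b, Relation.TransGen r a b → s a b := by
  intro a b hab
  induction hab with
  | single h' => exact h _ _ h'
  | tail _ h' ih => exact hs ih (h _ _ h')

lemma compat_iff {n : ℕ} {P T : Fin n → Fin n → Prop} (hP : P ∈ PartialOrds n)
    (hT : T ∈ TotalOrds n) : OrdCompat P T ↔ ∀ a b, P a b → T a b := by
  constructor
  · intro hc a b hab
    by_contra hTab
    have hne : a ≠ b := fun h => hP.1 a (h ▸ hab)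
    have hTba : T b a := (hT.2.2 a b hne).resolve_left hTab
    exact hc a ((Relation.TransGen.single (r := fun a b => P a b ∨ T a b)
      (Or.inl hab)).tail (Or.inr hTba))
  · intro hsub a ha
    exact hT.1 a
      (transGen_le_of_trans hT.2.1 (fun x y hxy => hxy.elim (hsub x y) id) a a ha)

lemma card_range_filter_even (n : ℕ) :
    #((Finset.range n).filter fun i => i % 2 = 0) = (n + 1) / 2 := by
  induction n with
  | zero => simp
  | succ m ih =>
    rw [Finset.range_add_one, Finset.filter_insert]
    by_cases h : m % 2 = 0
    · rw [if_pos h, Finset.card_insert_of_notMem (by simp), ih]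
      omega
    · rw [if_neg h, ih]
      omega

lemma card_range_filter_odd (n : ℕ) :
    #((Finset.range n).filter fun i => ¬ i % 2 = 0) = n / 2 := by
  induction n with
  | zero => simp
  | succ m ih =>
    rw [Finset.range_add_one, Finset.filter_insert]
    by_cases h : m % 2 = 0
    · rw [if_neg (by simp [h]), ih]
      omega
    · rw [if_pos h, Finset.card_insert_of_notMem (by simp), ih]
      omega

lemma card_fin_filter_even (n : ℕ) :
    #(Finset.univ.filter fun x : Fin n => x.1 % 2 = 0) = (n + 1) / 2 := by
  rw [← card_range_filter_even n]
  apply Finset.card_bij (fun (x : Fin n) _ => x.1)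
  · intro a ha
    simp only [Finset.mem_filter, Finset.mem_univ, true_and] at ha
    simp [a.2, ha]
  · intro a _ b _ h
    exact Fin.val_injective h
  · intro b hb
    simp only [Finset.mem_filter, Finset.mem_range] at hb
    exact ⟨⟨b, hb.1⟩, by simp [hb.2], rfl⟩

lemma card_fin_filter_odd (n : ℕ) :
    #(Finset.univ.filter fun x : Fin n => ¬ x.1 % 2 = 0) = n / 2 := by
  rw [← card_range_filter_odd n]
  apply Finset.card_bij (fun (x : Fin n) _ => x.1)
  · intro a ha
    simp only [Finset.mem_filter, Finset.mem_univ, true_and] at ha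
    simp only [Finset.mem_filter, Finset.mem_range]
    exact ⟨a.2, ha⟩
  · intro a _ b _ h
    exact Fin.val_injective h
  · intro b hb
    simp only [Finset.mem_filter, Finset.mem_range] at hb
    refine ⟨⟨b, hb.1⟩, ?_, rfl⟩
    simp only [Finset.mem_filter, Finset.mem_univ, true_and]
    exact hb.2

lemma nat_half_mul_half (n : ℕ) : (n + 1) / 2 * (n / 2) = n ^ 2 / 4 := by
  obtain ⟨k, rfl | rfl⟩ := n.even_or_odd'
  · have h1 : (2 * k + 1) / 2 = k := by omega
    have h2 : 2 * k / 2 = k := by omega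
    have h3 : (2 * k) ^ 2 = 4 * (k * k) := by ring
    rw [h1, h2, h3, Nat.mul_div_cancel_left _ (by norm_num)]
  · have h1 : (2 * k + 1 + 1) / 2 = k + 1 := by omega
    have h2 : (2 * k + 1) / 2 = k := by omega
    have h3 : (2 * k + 1) ^ 2 = 4 * ((k + 1) * k) + 1 := by ring
    rw [h1, h2, h3]
    omega

lemma turan2_card_edges (n : ℕ) : #((SimpleGraph.turanGraph n 2).edgeFinset) = n ^ 2 / 4 := by
  have h2 := (SimpleGraph.turanGraph n 2).two_mul_card_edgeFinset
  have hadj : ∀ v w : Fin n, (SimpleGraph.turanGraph n 2).Adj v w ↔ ¬ (v.1 % 2 = w.1 % 2) := by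
    intro v w; simp [SimpleGraph.turanGraph]
  set E := Finset.univ.filter fun x : Fin n => x.1 % 2 = 0 with hE
  set O := Finset.univ.filter fun x : Fin n => ¬ x.1 % 2 = 0 with hO
  have hsplit : (Finset.univ.filter fun (p : Fin n × Fin n) =>
      (SimpleGraph.turanGraph n 2).Adj p.1 p.2) = E ×ˢ O ∪ O ×ˢ E := by
    ext ⟨x, y⟩
    simp only [Finset.mem_filter, Finset.mem_univ, true_and, Finset.mem_union,
      Finset.mem_product, hE, hO, hadj]
    omega
  have hdisj : Disjoint (E ×ˢ O) (O ×ˢ E) := by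
    rw [Finset.disjoint_left]
    rintro ⟨x, y⟩ h1 h2
    simp only [Finset.mem_product, hE, hO, Finset.mem_filter, Finset.mem_univ, true_and] at h1 h2
    exact h2.1 h1.1
  have hcardE : #E = (n + 1) / 2 := card_fin_filter_even n
  have hcardO : #O = n / 2 := card_fin_filter_odd n
  have : 2 * #((SimpleGraph.turanGraph n 2).edgeFinset) = 2 * ((n + 1) / 2 * (n / 2)) := by
    rw [h2, hsplit, Finset.card_union_of_disjoint hdisj, Finset.card_product,
      Finset.card_product, hcardE, hcardO]
    ring
  have := Nat.eq_of_mul_eq_mul_left (by norm_num : 0 < 2) this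
  rw [this, nat_half_mul_half]

theorem stmt8 {n : ℕ} (hn : 4 ≤ n) :
    ∀ S ⊆ TotalOrds n, ShattersVia (PartialOrds n) OrdCompat S →
      S.Finite ∧ S.ncard ≤ n ^ 2 / 4 := by
  classical
  intro S hS hshat
  -- Step 1: for each T ∈ S, a pair reversed by T but agreed on by everyone else in S.
  have key : ∀ T ∈ S, ∃ p : Fin n × Fin n, p.1 ≠ p.2 ∧ ¬ T p.1 p.2 ∧
      ∀ T' ∈ S, T' ≠ T → T' p.1 p.2 := by
    intro T hT
    obtain ⟨P, hP, hPeq⟩ := hshat (S \ {T}) Set.diff_subset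
    have hTnot : ¬ OrdCompat P T := by
      intro hc
      have : T ∈ S \ {T} := by rw [← hPeq]; exact ⟨hT, hc⟩
      exact this.2 rfl
    rw [compat_iff hP (hS hT)] at hTnot
    push_neg at hTnot
    obtain ⟨a, b, hab, hnab⟩ := hTnot
    refine ⟨(a, b), ?_, hnab, ?_⟩
    · intro h
      have h' : a = b := h
      subst h'
      exact hP.1 a hab
    intro T' hT' hne
    have hmem : T' ∈ S \ {T} := ⟨hT', hne⟩
    rw [← hPeq] at hmem
    exact (compat_iff hP (hS hT')).1 hmem.2 a b hab
  haveI : Nonempty (Fin n) := ⟨⟨0, by omega⟩⟩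
  choose! F hFne hFrev hFmaj using key
  -- ordered-pair injectivity (hence finiteness)
  have hinj : Set.InjOn F S := by
    intro T1 h1 T2 h2 heq
    by_contra hne12
    have h21 : T2 (F T1).1 (F T1).2 := hFmaj T1 h1 T2 h2 (Ne.symm hne12)
    rw [heq] at h21
    exact hFrev T2 h2 h21
  have hfin : S.Finite := Set.Finite.of_finite_image (Set.toFinite _) hinj
  refine ⟨hfin, ?_⟩
  by_contra hcard
  push_neg at hcard
  have h4 : 4 ≤ n ^ 2 / 4 := by
    rw [Nat.le_div_iff_mul_le (by norm_num)]
    nlinarith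
  have h5 : 5 ≤ S.ncard := by omega
  -- we can always find an element of S avoiding any three given orders
  have hextra : ∀ T1 T2 T3 : Fin n → Fin n → Prop,
      ∃ T ∈ S, T ≠ T1 ∧ T ≠ T2 ∧ T ≠ T3 := by
    intro T1 T2 T3
    have hns : ¬ S ⊆ {T1, T2, T3} := by
      intro hsub
      have h1 := Set.ncard_le_ncard hsub (Set.toFinite _)
      have h2 : ({T1, T2, T3} : Set (Fin n → Fin n → Prop)).ncard ≤ 3 := by
        refine le_trans (Set.ncard_insert_le _ _) ?_
        have := Set.ncard_insert_le T2 ({T3} : Set (Fin n → Fin n → Prop))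
        simp only [Set.ncard_singleton] at this ⊢
        omega
      omega
    obtain ⟨T, hTS, hTn⟩ := Set.not_subset.1 hns
    simp only [Set.mem_insert_iff, Set.mem_singleton_iff, not_or] at hTn
    exact ⟨T, hTS, hTn.1, hTn.2.1, hTn.2.2⟩
  -- basic helpers
  have cyc : ∀ R ∈ S, ∀ u v w : Fin n, R u v → R v w → R w u → False := by
    intro R hR u v w h1 h2 h3
    exact (hS hR).1 u ((hS hR).2.1 ((hS hR).2.1 h1 h2) h3)
  have getmaj : ∀ T ∈ S, ∀ R ∈ S, R ≠ T → ∀ p q : Fin n, F T = (p, q) → R p q := by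
    intro T hT R hR hne p q hF
    have := hFmaj T hT R hR hne
    rw [hF] at this
    exact this
  have getrev : ∀ T ∈ S, ∀ p q : Fin n, F T = (p, q) → T q p := by
    intro T hT p q hF
    have hne := hFne T hT
    have hnab := hFrev T hT
    rw [hF] at hne hnab
    exact ((hS hT).2.2 p q hne).resolve_left hnab
  -- the triangle-freeness core argument
  have tri : ∀ x y z : Fin n, ∀ Txy Tyz Txz, Txy ∈ S → Tyz ∈ S → Txz ∈ S →
      x ≠ y → y ≠ z → x ≠ z →
      (F Txy = (x, y) ∨ F Txy = (y, x)) → (F Tyz = (y, z) ∨ F Tyz = (z, y)) →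
      (F Txz = (x, z) ∨ F Txz = (z, x)) → False := by
    intro x y z Txy Tyz Txz hxyS hyzS hxzS hxy hyz hxz h1 h2 h3
    have dxy_yz : Txy ≠ Tyz := by
      rintro rfl
      rcases h1 with h | h <;> rcases h2 with h' | h' <;> rw [h] at h' <;>
        injection h' with e1 e2 <;>
        first | exact hxy e1 | exact hxy e1.symm | exact hyz e1 | exact hyz e1.symm
              | exact hxz e1 | exact hxz e1.symm | exact hxy e2 | exact hxy e2.symm
              | exact hyz e2 | exact hyz e2.symm | exact hxz e2 | exact hxz e2.symm
    have dxy_xz : Txy ≠ Txz := by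
      rintro rfl
      rcases h1 with h | h <;> rcases h3 with h' | h' <;> rw [h] at h' <;>
        injection h' with e1 e2 <;>
        first | exact hxy e1 | exact hxy e1.symm | exact hyz e1 | exact hyz e1.symm
              | exact hxz e1 | exact hxz e1.symm | exact hxy e2 | exact hxy e2.symm
              | exact hyz e2 | exact hyz e2.symm | exact hxz e2 | exact hxz e2.symm
    have dyz_xz : Tyz ≠ Txz := by
      rintro rfl
      rcases h2 with h | h <;> rcases h3 with h' | h' <;> rw [h] at h' <;>
        injection h' with e1 e2 <;>
        first | exact hxy e1 | exact hxy e1.symm | exact hyz e1 | exact hyz e1.symm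
              | exact hxz e1 | exact hxz e1.symm | exact hxy e2 | exact hxy e2.symm
              | exact hyz e2 | exact hyz e2.symm | exact hxz e2 | exact hxz e2.symm
    obtain ⟨T4, hT4S, d41, d42, d43⟩ := hextra Txy Tyz Txz
    rcases h1 with h1 | h1 <;> rcases h2 with h2 | h2 <;> rcases h3 with h3 | h3
    · -- (x,y) (y,z) (x,z) : use Txz
      exact cyc Txz hxzS x y z (getmaj Txy hxyS Txz hxzS dxy_xz.symm x y h1)
        (getmaj Tyz hyzS Txz hxzS dyz_xz.symm y z h2) (getrev Txz hxzS x z h3)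
    · -- (x,y) (y,z) (z,x) : cyclic, use T4
      exact cyc T4 hT4S x y z (getmaj Txy hxyS T4 hT4S d41 x y h1)
        (getmaj Tyz hyzS T4 hT4S d42 y z h2) (getmaj Txz hxzS T4 hT4S d43 z x h3)
    · -- (x,y) (z,y) (x,z) : use Txy : x→z→y→x
      exact cyc Txy hxyS x z y (getmaj Txz hxzS Txy hxyS dxy_xz x z h3)
        (getmaj Tyz hyzS Txy hxyS dxy_yz z y h2) (getrev Txy hxyS x y h1)
    · -- (x,y) (z,y) (z,x) : use Tyz : z→x→y→z
      exact cyc Tyz hyzS z x y (getmaj Txz hxzS Tyz hyzS dyz_xz z x h3)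
        (getmaj Txy hxyS Tyz hyzS dxy_yz.symm x y h1) (getrev Tyz hyzS z y h2)
    · -- (y,x) (y,z) (x,z) : use Tyz : y→x→z→y
      exact cyc Tyz hyzS y x z (getmaj Txy hxyS Tyz hyzS dxy_yz.symm y x h1)
        (getmaj Txz hxzS Tyz hyzS dyz_xz x z h3) (getrev Tyz hyzS y z h2)
    · -- (y,x) (y,z) (z,x) : use Txy : y→z→x→y
      exact cyc Txy hxyS y z x (getmaj Tyz hyzS Txy hxyS dxy_yz y z h2)
        (getmaj Txz hxzS Txy hxyS dxy_xz z x h3) (getrev Txy hxyS y x h1)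
    · -- (y,x) (z,y) (x,z) : cyclic, use T4 : x→z→y→x
      exact cyc T4 hT4S x z y (getmaj Txz hxzS T4 hT4S d43 x z h3)
        (getmaj Tyz hyzS T4 hT4S d42 z y h2) (getmaj Txy hxyS T4 hT4S d41 y x h1)
    · -- (y,x) (z,y) (z,x) : use Txz : z→y→x→z
      exact cyc Txz hxzS z y x (getmaj Tyz hyzS Txz hxzS dyz_xz.symm z y h2)
        (getmaj Txy hxyS Txz hxzS dxy_xz.symm y x h1) (getrev Txz hxzS z x h3)
  -- the graph of reversed pairs
  let G : SimpleGraph (Fin n) :=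
    { Adj := fun u v => u ≠ v ∧ ∃ T ∈ S, F T = (u, v) ∨ F T = (v, u)
      symm := ⟨by
        rintro u v ⟨huv, T, hT, h | h⟩
        · exact ⟨huv.symm, T, hT, Or.inr h⟩
        · exact ⟨huv.symm, T, hT, Or.inl h⟩⟩
      loopless := ⟨fun u h => h.1 rfl⟩ }
  have hCF : G.CliqueFree 3 := by
    intro t ht
    obtain ⟨a, b, c, hab, hac, hbc, rfl⟩ := SimpleGraph.is3Clique_iff.1 ht
    exact tri a b c hab.2.choose hbc.2.choose hac.2.choose
      hab.2.choose_spec.1 hbc.2.choose_spec.1 hac.2.choose_spec.1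
      hab.1 hbc.1 hac.1
      hab.2.choose_spec.2 hbc.2.choose_spec.2 hac.2.choose_spec.2
  -- count: |S| ≤ |E(G)| ≤ n²/4
  have hinj2 : Set.InjOn (fun T => s((F T).1, (F T).2)) S := by
    intro T1 hT1 T2 hT2 heq
    by_contra hne12
    simp only [Sym2.eq_iff] at heq
    rcases heq with ⟨ha, hb⟩ | ⟨ha, hb⟩
    · exact hne12 (hinj hT1 hT2 (Prod.ext ha hb))
    · obtain ⟨T3, hT3S, d31, d32, _⟩ := hextra T1 T2 T2
      have e1 : T3 (F T1).1 (F T1).2 := hFmaj T1 hT1 T3 hT3S d31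
      have e2 : T3 (F T2).1 (F T2).2 := hFmaj T2 hT2 T3 hT3S d32
      rw [← ha, ← hb] at e2
      exact (hS hT3S).1 _ ((hS hT3S).2.1 e1 e2)
  have hsubE : (fun T => s((F T).1, (F T).2)) '' S ⊆ G.edgeSet := by
    rintro e ⟨T, hT, rfl⟩
    exact ⟨hFne T hT, T, hT, Or.inl rfl⟩
  have hle : S.ncard ≤ #G.edgeFinset := by
    calc S.ncard = ((fun T => s((F T).1, (F T).2)) '' S).ncard :=
          (Set.ncard_image_of_injOn hinj2).symm
      _ ≤ G.edgeSet.ncard := Set.ncard_le_ncard hsubE (Set.toFinite _)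
      _ = #G.edgeFinset := by
          rw [Set.ncard_eq_toFinset_card' G.edgeSet]
          congr 1
  have hturan : #G.edgeFinset ≤ #((SimpleGraph.turanGraph n 2).edgeFinset) :=
    (SimpleGraph.isTuranMaximal_turanGraph (r := 2) (by norm_num)).2 hCF
  rw [turan2_card_edges n] at hturan
  omega
end

section
/- For n ≥ 4, the VC-dimension of the family of partial orders on [n] over the total orders on [n] (via compatibility) is at least ⌊n²/4⌋. Specifically, letting k = ⌊n/2⌋ and for each pair (i,j) with 1 ≤ i ≤ k < j ≤ n letting A_{i,j} be a topological ordering of the acyclic digraph consisting of the edge j → i together with all edges i' → j' for pairs (i',j') ≠ (i,j) with 1 ≤ i' ≤ k < j' ≤ n, the set {A_{i,j}} of total orders is shattered by the partial orders via compatibility. -/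
theorem stmt9 {n : ℕ} (hn : 4 ≤ n)
    (A : Fin n × Fin n → (Fin n → Fin n → Prop))
    (hA : ∀ p : Fin n × Fin n, p.1.val < n / 2 → n / 2 ≤ p.2.val →
      A p ∈ TotalOrds n ∧
      (∀ a b : Fin n, ((a = p.2 ∧ b = p.1) ∨
        (a.val < n / 2 ∧ n / 2 ≤ b.val ∧ (a, b) ≠ p)) → A p a b)) :
    ShattersVia (PartialOrds n) OrdCompat
      (A '' {p | p.1.val < n / 2 ∧ n / 2 ≤ p.2.val}) ∧
    n ^ 2 / 4 ≤ (A '' {p | p.1.val < n / 2 ∧ n / 2 ≤ p.2.val}).ncard := by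
  set k := n / 2 with hk
  constructor
  · -- Shattering
    intro 𝒜 h𝒜
    refine ⟨fun a b => a.val < k ∧ k ≤ b.val ∧ A (a, b) ∉ 𝒜, ⟨?_, ?_⟩, ?_⟩
    · intro a ha
      omega
    · intro a b c hab hbc
      exfalso; omega
    · ext y
      simp only [Set.mem_setOf_eq, Set.mem_image]
      constructor
      · rintro ⟨⟨p, ⟨hp1, hp2⟩, rfl⟩, hcompat⟩
        by_contra hy
        -- the cycle p.1 → p.2 → p.1
        have h1 : p.1.val < k ∧ k ≤ p.2.val ∧ A (p.1, p.2) ∉ 𝒜 := ⟨hp1, hp2, hy⟩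
        have h2 : A p p.2 p.1 := (hA p hp1 hp2).2 p.2 p.1 (Or.inl ⟨rfl, rfl⟩)
        exact hcompat p.1 (Relation.TransGen.head (Or.inl h1)
          (Relation.TransGen.single (Or.inr h2)))
      · intro hy
        obtain ⟨p, hp, rfl⟩ := h𝒜 hy
        refine ⟨⟨p, hp, rfl⟩, ?_⟩
        obtain ⟨hirr, htrans, -⟩ := (hA p hp.1 hp.2).1
        have hsub : ∀ a b : Fin n,
            ((a.val < k ∧ k ≤ b.val ∧ A (a, b) ∉ 𝒜) ∨ A p a b) → A p a b := by
          rintro a b (⟨ha, hb, hab⟩ | h)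
          · refine (hA p hp.1 hp.2).2 a b (Or.inr ⟨ha, hb, ?_⟩)
            rintro rfl
            exact hab hy
          · exact h
        intro x hx
        have : A p x x := by
          have : A p x x := Relation.TransGen.head_induction_on (motive := fun a _ => A p a x) hx
            (fun h => hsub _ _ h)
            (fun h _ ih => htrans (hsub _ _ h) ih)
          exact this
        exact hirr x this
  · -- Cardinality
    have hkn : k < n := by omega
    have hinj : Set.InjOn A {p : Fin n × Fin n | p.1.val < k ∧ k ≤ p.2.val} := by
      rintro p ⟨hp1, hp2⟩ q ⟨hq1, hq2⟩ heq
      by_contra hne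
      obtain ⟨hirr, htrans, -⟩ := (hA p hp1 hp2).1
      have h1 : A p q.1 q.2 := (hA p hp1 hp2).2 q.1 q.2 (Or.inr ⟨hq1, hq2, by simpa [eq_comm] using hne⟩)
      have h2 : A q q.2 q.1 := (hA q hq1 hq2).2 q.2 q.1 (Or.inl ⟨rfl, rfl⟩)
      rw [← heq] at h2
      exact hirr q.1 (htrans h1 h2)
    rw [Set.ncard_image_of_injOn hinj]
    have hset : {p : Fin n × Fin n | p.1.val < k ∧ k ≤ p.2.val} =
        ↑(Finset.Iio (⟨k, hkn⟩ : Fin n) ×ˢ Finset.Ici (⟨k, hkn⟩ : Fin n)) := by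
      ext p
      simp [Fin.lt_def, Fin.le_def]
    rw [hset, Set.ncard_coe_finset, Finset.card_product, Fin.card_Iio, Fin.card_Ici]
    obtain h2 | h2 : n = 2 * k ∨ n = 2 * k + 1 := by omega
    · have : n ^ 2 = 4 * k ^ 2 := by rw [h2]; ring
      rw [this, Nat.mul_div_cancel_left _ (by norm_num)]
      have : (⟨k, hkn⟩ : Fin n).val = k := rfl
      rw [this]
      have h3 : n - k = k := by omega
      rw [h3, sq]
    · have : n ^ 2 = 4 * (k ^ 2 + k) + 1 := by rw [h2]; ring
      rw [this]
      have h4 : (4 * (k ^ 2 + k) + 1) / 4 = k ^ 2 + k := by omega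
      rw [h4]
      have hv : (⟨k, hkn⟩ : Fin n).val = k := rfl
      rw [hv]
      have : n - k = k + 1 := by omega
      rw [this]; ring_nf; omega
end

section
/- Let S be a set of total orders on [n] shattered by the partial orders via compatibility, with |S| ≥ n+1. For each A ∈ S choose a partial order G_A compatible with every element of S \ {A} but not with A, and choose an edge e_A of G_A that contradicts A (i.e., e_A = (x,y) with y <_A x). Then the directed graph G = {e_A : A ∈ S} contains no directed cycle. -/
/-- A total order compatible with `P` extends `P`. -/
lemma extend_of_compat {n : ℕ} {P T : Fin n → Fin n → Prop}
    (hT : T ∈ TotalOrds n) (hc : OrdCompat P T) {a b : Fin n} (hab : P a b) : T a b := by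
  rcases eq_or_ne a b with rfl | hne
  · exact absurd (Relation.TransGen.single (r := fun a b => P a b ∨ T a b) (Or.inl hab)) (hc a)
  · rcases hT.2.2 a b hne with h | h
    · exact h
    · exact absurd ((Relation.TransGen.single (r := fun a b => P a b ∨ T a b)
        (Or.inl hab)).tail (Or.inr h)) (hc a)

/-- Extract a finite indexed path from a `TransGen` witness. -/
lemma transGen_path {α : Type*} {r : α → α → Prop} {x y : α} (h : Relation.TransGen r x y) :
    ∃ m, 1 ≤ m ∧ ∃ v : ℕ → α, v 0 = x ∧ v m = y ∧ ∀ i < m, r (v i) (v (i + 1)) := by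
  induction h with
  | @single b hxy =>
    refine ⟨1, le_refl 1, fun i => if i = 0 then x else b, by simp, by simp, ?_⟩
    intro i hi
    interval_cases i
    simpa using hxy
  | @tail b c _ hbc ih =>
    obtain ⟨m, hm, v, h0, hm', hst⟩ := ih
    refine ⟨m + 1, by omega, fun i => if i ≤ m then v i else c, by simp [h0], by simp, ?_⟩
    intro i hi
    rcases Nat.lt_or_ge i m with hlt | hge
    · simpa [Nat.le_of_lt hlt, Nat.succ_le_of_lt hlt] using hst i hlt
    · have : i = m := by omega
      subst this
      simpa [hm'] using hbc

/-- A cycle can be shortened to one of length at most `n`. -/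
lemma cycle_short {n : ℕ} {r : Fin n → Fin n → Prop}
    (x : Fin n) (m : ℕ) (hm : 1 ≤ m) (v : ℕ → Fin n)
    (h0 : v 0 = x) (hmx : v m = x) (hst : ∀ i < m, r (v i) (v (i + 1))) :
    ∃ m', 1 ≤ m' ∧ m' ≤ n ∧ ∃ w : ℕ → Fin n, w m' = w 0 ∧
      ∀ i < m', r (w i) (w (i + 1)) := by
  induction m using Nat.strong_induction_on generalizing x v with
  | _ m ih =>
    rcases le_or_gt m n with hle | hgt
    · exact ⟨m, hm, hle, v, by rw [hmx, h0], hst⟩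
    · -- pigeonhole: two equal vertices among v 0, ..., v (m-1)
      have hcard : Fintype.card (Fin n) < (Finset.range m).card := by
        simp [Fintype.card_fin, hgt]
      obtain ⟨i, hi, j, hj, hne, hvij⟩ :=
        Finset.exists_ne_map_eq_of_card_lt_of_maps_to (s := Finset.range m)
          (t := (Finset.univ : Finset (Fin n))) (f := fun a => v a)
          (by simpa using hgt) (fun a _ => Finset.mem_univ (v a))
      simp only [Finset.mem_range] at hi hj
      obtain ⟨i, j, hij, hj, hvij⟩ : ∃ i j, i < j ∧ j < m ∧ v i = v j := by
        rcases lt_or_gt_of_ne hne with h | h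
        · exact ⟨i, j, h, hj, hvij⟩
        · exact ⟨j, i, h, hi, hvij.symm⟩
      refine ih (j - i) (by omega) (v i) (by omega) (fun k => v (i + k)) rfl ?_ ?_
      · show v (i + (j - i)) = v i
        have : i + (j - i) = j := by omega
        rw [this, ← hvij]
      · intro k hk
        have : i + k < m := by omega
        have hrk := hst (i + k) this
        simpa [Nat.add_assoc] using hrk

theorem stmt12 {n : ℕ} (S : Set (Fin n → Fin n → Prop))
    (hS : S ⊆ TotalOrds n) (hfin : S.Finite)
    (hsh : ShattersVia (PartialOrds n) OrdCompat S)
    (hcard : n + 1 ≤ S.ncard)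
    (G : (Fin n → Fin n → Prop) → (Fin n → Fin n → Prop))
    (e : (Fin n → Fin n → Prop) → Fin n × Fin n)
    (hG : ∀ A ∈ S, G A ∈ PartialOrds n ∧
      (∀ B ∈ S, B ≠ A → OrdCompat (G A) B) ∧ ¬ OrdCompat (G A) A)
    (he : ∀ A ∈ S, G A (e A).1 (e A).2 ∧ A (e A).2 (e A).1) :
    IsAcyclicRel (fun x y => ∃ A ∈ S, e A = (x, y)) := by
  intro x hx
  obtain ⟨m, hm1, v, hv0, hvm, hstep⟩ := transGen_path hx
  obtain ⟨m', hm'1, hm'n, w, hw, hwst⟩ :=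
    cycle_short (r := fun x y => ∃ A ∈ S, e A = (x, y)) x m hm1 v hv0 hvm hstep
  -- choose the orders giving the edges of the short cycle
  choose A hAS hAe using hwst
  -- the set of chosen orders has at most n elements
  set g : Fin m' → (Fin n → Fin n → Prop) := fun i => A i i.2 with hg
  set Tf : Finset (Fin n → Fin n → Prop) := Finset.image g Finset.univ with hTf
  have hTcard : (Tf : Set (Fin n → Fin n → Prop)).ncard ≤ n := by
    rw [Set.ncard_coe_finset]
    calc Tf.card ≤ (Finset.univ : Finset (Fin m')).card := Finset.card_image_le
      _ = m' := by simp
      _ ≤ n := hm'n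
  -- find C ∈ S avoiding all chosen orders
  have hnotsub : ¬ S ⊆ (Tf : Set (Fin n → Fin n → Prop)) := by
    intro hsub
    have := Set.ncard_le_ncard hsub (Tf.finite_toSet)
    omega
  obtain ⟨C, hCS, hCT⟩ := Set.not_subset.mp hnotsub
  -- C contains every edge of the cycle
  have hCedge : ∀ i (hi : i < m'), C (w i) (w (i + 1)) := by
    intro i hi
    have hmem : A i hi ∈ S := hAS i hi
    have hCne : C ≠ A i hi := by
      intro hCeq
      exact hCT (by
        rw [hTf]
        exact Finset.mem_image.mpr ⟨⟨i, hi⟩, Finset.mem_univ _, by rw [hg]; exact hCeq.symm⟩)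
    have hcomp : OrdCompat (G (A i hi)) C := (hG _ hmem).2.1 C hCS hCne
    have hGedge : G (A i hi) (w i) (w (i + 1)) := by
      have := (he _ hmem).1
      rw [hAe i hi] at this
      exact this
    exact extend_of_compat (hS hCS) hcomp hGedge
  -- chain up the cycle to contradict irreflexivity of C
  have hCtot := hS hCS
  have hchain : ∀ i, 1 ≤ i → i ≤ m' → C (w 0) (w i) := by
    intro i
    induction i with
    | zero => omega
    | succ k ihk =>
      intro _ hk
      rcases Nat.eq_zero_or_pos k with rfl | hkpos
      · exact hCedge 0 (by omega)
      · exact hCtot.2.1 (ihk hkpos (by omega)) (hCedge k (by omega))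
  have : C (w 0) (w 0) := by
    have := hchain m' hm'1 le_rfl
    rwa [hw] at this
  exact hCtot.1 _ this
end

section
/- With the setup of the previous claim (S a shattered set of total orders with |S| ≥ n+1, and G = {e_A : A ∈ S} the chosen contradicting edges), there is no directed path of length ≥ 2 in G from a vertex x to a vertex y such that the edge x → y also lies in G. Consequently, the underlying undirected graph of G is triangle-free. -/
lemma myExistsDup {α : Type*} : ∀ (l : List α), ¬ l.Nodup →
    ∃ (a : α) (l₁ l₂ l₃ : List α), l = l₁ ++ a :: l₂ ++ a :: l₃ := by
  intro l
  induction l with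
  | nil => simp
  | cons x xs ih =>
    intro h
    rw [List.nodup_cons] at h
    by_cases hx : x ∈ xs
    · obtain ⟨s, t, hst⟩ := List.append_of_mem hx
      exact ⟨x, [], s, t, by simp [hst]⟩
    · have hxs : ¬ xs.Nodup := by tauto
      obtain ⟨a, l₁, l₂, l₃, hd⟩ := ih hxs
      exact ⟨a, x :: l₁, l₂, l₃, by simp [hd]⟩

lemma myChainConcat {α : Type*} {r : α → α → Prop} :
    ∀ (l : List α) (a b : α), List.Chain r a (l ++ [b]) ↔
      List.Chain r a l ∧ r ((a :: l).getLast (List.cons_ne_nil a l)) b := by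
  intro l
  induction l with
  | nil => simp [List.Chain]
  | cons x xs ih =>
    intro a b
    simp only [List.Chain] at ih ⊢
    simp only [List.cons_append, List.chain_cons, ih, List.getLast_cons_cons]
    tauto

lemma myChainRestrict {α : Type*} {r r' : α → α → Prop} :
    ∀ (l : List α) (a : α), List.Chain r a l →
      (∀ p ∈ (a :: l).zip l, r p.1 p.2 → r' p.1 p.2) → List.Chain r' a l := by
  intro l
  induction l with
  | nil => intros; exact .nil
  | cons x xs ih =>
    intro a hc h
    simp only [List.Chain] at hc ih ⊢
    rw [List.chain_cons] at hc ⊢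
    refine ⟨h (a, x) (by simp [List.zip_cons_cons]) hc.1,
      ih x hc.2 fun p hp hr => h p ?_ hr⟩
    simp only [List.zip_cons_cons, List.mem_cons]
    exact Or.inr hp

theorem stmt13 {n : ℕ} (S : Set (Fin n → Fin n → Prop))
    (hS : S ⊆ TotalOrds n) (hfin : S.Finite)
    (hsh : ShattersVia (PartialOrds n) OrdCompat S)
    (hcard : n + 1 ≤ S.ncard)
    (G : (Fin n → Fin n → Prop) → (Fin n → Fin n → Prop))
    (e : (Fin n → Fin n → Prop) → Fin n × Fin n)
    (hG : ∀ A ∈ S, G A ∈ PartialOrds n ∧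
      (∀ B ∈ S, B ≠ A → OrdCompat (G A) B) ∧ ¬ OrdCompat (G A) A)
    (he : ∀ A ∈ S, G A (e A).1 (e A).2 ∧ A (e A).2 (e A).1) :
    (∀ x y z : Fin n, (∃ A ∈ S, e A = (x, y)) → (∃ A ∈ S, e A = (x, z)) →
      ¬ Relation.TransGen (fun u v => ∃ A ∈ S, e A = (u, v)) z y) ∧
    (¬ ∃ a b c : Fin n, a ≠ b ∧ b ≠ c ∧ a ≠ c ∧
      ((∃ A ∈ S, e A = (a, b)) ∨ (∃ A ∈ S, e A = (b, a))) ∧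
      ((∃ A ∈ S, e A = (b, c)) ∨ (∃ A ∈ S, e A = (c, b))) ∧
      ((∃ A ∈ S, e A = (a, c)) ∨ (∃ A ∈ S, e A = (c, a)))) := by
  classical
  set r : Fin n → Fin n → Prop := fun u v => ∃ A ∈ S, e A = (u, v) with hr
  -- asymmetry of members of S
  have asym : ∀ B ∈ S, ∀ p q, B p q → ¬ B q p := by
    intro B hB p q h1 h2
    obtain ⟨hirr, htr, _⟩ := hS hB
    exact hirr p (htr h1 h2)
  -- key fact: an edge e A lies in every other B ∈ S
  have key : ∀ A ∈ S, ∀ B ∈ S, B ≠ A → B (e A).1 (e A).2 := by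
    intro A hA B hB hBA
    obtain ⟨⟨hirr, htr⟩, hcompat, _⟩ := hG A hA
    obtain ⟨hGe, hAe⟩ := he A hA
    have hne : (e A).1 ≠ (e A).2 := fun h => hirr _ (h ▸ hGe)
    by_contra hnB
    obtain ⟨_, _, htot⟩ := hS hB
    have hBvu : B (e A).2 (e A).1 := (htot _ _ hne).resolve_left hnB
    exact hcompat B hB hBA (e A).1
      (Relation.TransGen.head (Or.inl hGe) (Relation.TransGen.single (Or.inr hBvu)))
  -- e is injective on S
  have einj : Set.InjOn e S := by
    intro A1 h1 A2 h2 hEq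
    by_contra hne
    have h12 := key A2 h2 A1 h1 hne
    have := (he A1 h1).2
    rw [hEq] at this
    exact asym A1 h1 _ _ h12 this
  -- an edge of r distinct from e B lies in B
  have edge_mem : ∀ u v, r u v → ∀ B ∈ S, (u, v) ≠ e B → B u v := by
    intro u v ⟨A, hA, hAe⟩ B hB hne
    have hBA : B ≠ A := fun h => hne (by rw [h, hAe])
    have := key A hA B hB hBA
    rwa [hAe] at this
  -- no edge is a self-loop
  have no_self : ∀ u, ¬ r u u := by
    intro u ⟨A, hA, hAe⟩
    obtain ⟨⟨hirr, _⟩, _, _⟩ := hG A hA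
    have := (he A hA).1
    rw [hAe] at this
    exact hirr u this
  -- r is acyclic
  have no_cycle : ∀ w, ¬ Relation.TransGen r w w := by
    intro w hw
    have hex : ∃ k, ∃ l : List (Fin n),
        ((∃ h : l ≠ [], List.Chain r (l.getLast h) l) ∧ l.length = k) := by
      obtain ⟨c, hc, hrt⟩ := Relation.TransGen.head'_iff.mp hw
      obtain ⟨lw, hlw, hlast⟩ := List.exists_isChain_cons_of_relationReflTransGen hrt
      refine ⟨(c :: lw).length, c :: lw, ⟨⟨by simp, ?_⟩, rfl⟩⟩
      rw [show (c :: lw).getLast (by simp) = w from hlast]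
      exact List.Chain.cons hc hlw
    obtain ⟨l, ⟨hlne, hchain⟩, hlen⟩ := Nat.find_spec hex
    -- minimality: l is a shortest cycle
    have hmin : ∀ l' : List (Fin n), (∃ h : l' ≠ [], List.Chain r (l'.getLast h) l') →
        l.length ≤ l'.length := by
      intro l' hl'
      by_contra hlt
      push_neg at hlt
      exact Nat.find_min hex (by omega) ⟨l', hl', rfl⟩
    -- l has no duplicate vertices
    have hnodup : l.Nodup := by
      by_contra hnd
      obtain ⟨v, l₁, l₂, l₃, hdec0⟩ := myExistsDup l hnd
      have hdec : l = l₁ ++ (v :: (l₂ ++ (v :: l₃))) := by simpa using hdec0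
      clear hdec0
      subst hdec
      have hch2 : List.Chain r v (l₂ ++ v :: l₃) := (List.isChain_cons_split (l₁ := l₁) (l₂ := l₂ ++ v :: l₃)).mp hchain |>.2
      have hch3 : List.Chain r v (l₂ ++ [v]) := (List.isChain_cons_split (l₁ := l₂) (l₂ := l₃)).mp hch2 |>.1
      rw [myChainConcat] at hch3
      have hc' : ∃ h : (v :: l₂) ≠ [], List.Chain r ((v :: l₂).getLast h) (v :: l₂) :=
        ⟨by simp, List.chain_cons.mpr ⟨hch3.2, hch3.1⟩⟩
      have := hmin (v :: l₂) hc'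
      simp only [List.length_cons, List.length_append] at this
      omega
    have hlen_le : l.length ≤ n := by
      have := hnodup.length_le_card
      simpa using this
    -- every e B is an edge of the cycle
    set E : List (Fin n × Fin n) := ((l.getLast hlne) :: l).zip l with hE
    have hedge : ∀ B ∈ S, e B ∈ E := by
      intro B hB
      by_contra hnotin
      have hchB : List.Chain B (l.getLast hlne) l := by
        refine myChainRestrict l _ hchain ?_
        intro p hp hrp
        refine edge_mem p.1 p.2 hrp B hB ?_
        intro hcontra
        rw [← hcontra] at hnotin
        exact hnotin hp
      obtain ⟨x, xs, hxl⟩ : ∃ x xs, l = x :: xs := by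
        cases l with
        | nil => exact absurd rfl hlne
        | cons x xs => exact ⟨x, xs, rfl⟩
      subst hxl
      rw [List.Chain, List.chain_cons] at hchB
      have hRT : Relation.ReflTransGen B x ((x :: xs).getLast hlne) := by
        exact List.relationReflTransGen_of_exists_isChain_cons xs hchB.2 rfl
      have hTG : Relation.TransGen B ((x :: xs).getLast hlne) ((x :: xs).getLast hlne) :=
        Relation.TransGen.head' hchB.1 hRT
      obtain ⟨hBirr, hBtr, _⟩ := hS hB
      rw [@Relation.transGen_eq_self _ _ (⟨fun _ _ _ h₁ h₂ => hBtr h₁ h₂⟩ : IsTrans _ B)] at hTG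
      exact hBirr _ hTG
    -- counting
    have himg : e '' S ⊆ ↑E.toFinset := by
      rintro p ⟨B, hB, rfl⟩
      simp only [Finset.coe_sort_coe, List.coe_toFinset, Set.mem_setOf_eq]
      exact hedge B hB
    have hcount : S.ncard ≤ E.length := by
      calc S.ncard = (e '' S).ncard := (Set.ncard_image_of_injOn einj).symm
        _ ≤ (E.toFinset : Set (Fin n × Fin n)).ncard :=
            Set.ncard_le_ncard himg (E.toFinset : Finset _).finite_toSet
        _ = E.toFinset.card := Set.ncard_coe_finset _
        _ ≤ E.length := List.toFinset_card_le E
    have hElen : E.length = l.length := by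
      simp [hE, List.length_zip]
    omega
  -- Part 1
  have part1 : ∀ x y z : Fin n, (∃ A ∈ S, e A = (x, y)) → (∃ A ∈ S, e A = (x, z)) →
      ¬ Relation.TransGen r z y := by
    classical
    rintro x y z ⟨A, hA, hAxy⟩ ⟨A', hA', hA'xz⟩ hpath
    have hxy : x ≠ y := by
      rintro rfl
      exact no_self x ⟨A, hA, hAxy⟩
    have hxz : x ≠ z := by
      rintro rfl
      exact no_self x ⟨A', hA', hA'xz⟩
    by_cases hzy : z = y
    · exact no_cycle y (hzy ▸ hpath)
    have hAA' : A ≠ A' := by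
      rintro rfl
      rw [hAxy] at hA'xz
      exact hzy (Prod.mk.injEq .. ▸ hA'xz).2.symm
    have step : ∀ w, Relation.TransGen r z w → A z w ∨ Relation.TransGen r z x := by
      intro w hw
      induction hw with
      | single h =>
        obtain ⟨B, hB, hBe⟩ := h
        have hBA : B ≠ A := by
          rintro rfl
          rw [hBe] at hAxy
          exact hxz ((Prod.mk.injEq .. ▸ hAxy).1).symm
        have := key B hB A hA (Ne.symm hBA)
        rw [hBe] at this
        exact Or.inl this
      | tail h₁ h₂ ih =>
        rcases ih with hAzw | hpx
        · obtain ⟨B, hB, hBe⟩ := h₂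
          by_cases hBA : B = A
          · subst hBA
            rw [hBe] at hAxy
            have hx : _ = x := (Prod.mk.injEq .. ▸ hAxy).1
            exact Or.inr (hx ▸ h₁)
          · have hAe := key B hB A hA (Ne.symm hBA)
            rw [hBe] at hAe
            obtain ⟨_, hAtr, _⟩ := hS hA
            exact Or.inl (hAtr hAzw hAe)
        · exact Or.inr hpx
    rcases step y hpath with hAzy | hpx
    · have hAxz : A x z := by
        have := key A' hA' A hA hAA'
        rwa [hA'xz] at this
      obtain ⟨_, hAtr, _⟩ := hS hA
      have hAxy' : A x y := hAtr hAxz hAzy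
      have hAyx : A y x := by
        have := (he A hA).2
        rwa [hAxy] at this
      exact asym A hA _ _ hAxy' hAyx
    · exact no_cycle x (Relation.TransGen.head ⟨A', hA', hA'xz⟩ hpx)
  refine ⟨part1, ?_⟩
  rintro ⟨a, b, c, hab, hbc, hac, h1 | h1, h2 | h2, h3 | h3⟩
  · exact part1 a c b h3 h1 (Relation.TransGen.single h2)
  · -- a→b, b→c, c→a : cycle
    exact no_cycle a (((Relation.TransGen.single h1).tail h2).tail h3)
  · exact part1 a b c h1 h3 (Relation.TransGen.single h2)
  · exact part1 c b a h2 h3 (Relation.TransGen.single h1)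
  · exact part1 b c a h2 h1 (Relation.TransGen.single h3)
  ·
    exact part1 b a c h1 h2 (Relation.TransGen.single h3)
  · exact no_cycle a (((Relation.TransGen.single h3).tail h2).tail h1)
  · exact part1 c a b h3 h2 (Relation.TransGen.single h1)
end

section
/- A triangle-free graph on n vertices has at most ⌊n²/4⌋ edges (Mantel's theorem); hence any shattered set of total orders S on [n] with the above contradicting-edge construction satisfies |S| ≤ ⌊n²/4⌋ when |S| ≥ n+1. -/
set_option linter.unreachableTactic false
set_option linter.unusedTactic false

open Finset SimpleGraph

lemma count_mod2 (n b : ℕ) (hb : b < 2) :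
    #(Finset.univ.filter fun w : Fin n => w.val % 2 = b) = (n + 1 - b) / 2 := by
  rw [← Finset.card_range ((n + 1 - b) / 2)]
  refine Finset.card_bij' (fun (w : Fin n) _ => w.val / 2)
    (fun k hk => (⟨2 * k + b, by simp only [Finset.mem_range] at hk; omega⟩ : Fin n))
    ?_ ?_ ?_ ?_
  · intro a ha
    simp only [Finset.mem_filter, Finset.mem_univ, true_and] at ha
    simp only [Finset.mem_range]
    have := a.isLt
    omega
  · intro k hk
    simp only [Finset.mem_range] at hk
    simp only [Finset.mem_filter, Finset.mem_univ, true_and]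
    omega
  · intro a ha
    simp only [Finset.mem_filter, Finset.mem_univ, true_and] at ha
    apply Fin.ext
    simp only
    omega
  · intro k hk
    simp only [Finset.mem_range] at hk
    simp only
    omega



lemma turan2_adj (n : ℕ) (v w : Fin n) :
    (turanGraph n 2).Adj v w ↔ v.val % 2 ≠ w.val % 2 := Iff.rfl

lemma turan2_degree (n : ℕ) (v : Fin n) :
    (turanGraph n 2).degree v = if v.val % 2 = 0 then n / 2 else (n + 1) / 2 := by
  rw [← card_neighborFinset_eq_degree, neighborFinset_eq_filter]
  split_ifs with h
  · rw [Finset.filter_congr (q := fun w : Fin n => w.val % 2 = 1)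
      (fun w _ => by simp only [turan2_adj, h]; constructor <;> intro <;> omega)]
    rw [count_mod2 n 1 one_lt_two]
    simp
  · rw [Finset.filter_congr (q := fun w : Fin n => w.val % 2 = 0)
      (fun w _ => by simp only [turan2_adj]; constructor <;> intro <;> omega)]
    have := count_mod2 n 0 (by norm_num)
    simpa using this

lemma turan2_card (n : ℕ) : #(turanGraph n 2).edgeFinset = n ^ 2 / 4 := by
  have hsum := SimpleGraph.sum_degrees_eq_twice_card_edges (turanGraph n 2)
  have hK : ∑ v : Fin n, (turanGraph n 2).degree v = 2 * ((n + 1) / 2 * (n / 2)) := by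
    calc ∑ v : Fin n, (turanGraph n 2).degree v
        = ∑ v : Fin n, (if v.val % 2 = 0 then n / 2 else (n + 1) / 2) :=
          Finset.sum_congr rfl fun v _ => turan2_degree n v
      _ = 2 * ((n + 1) / 2 * (n / 2)) := by
          rw [Finset.sum_ite, Finset.sum_const, Finset.sum_const]
          have c0 : #(Finset.univ.filter fun w : Fin n => w.val % 2 = 0) = (n + 1) / 2 := by
            have := count_mod2 n 0 (by norm_num); simpa using this
          have c1 : #(Finset.univ.filter fun w : Fin n => ¬ w.val % 2 = 0) = n / 2 := by
            rw [Finset.filter_congr (q := fun w : Fin n => w.val % 2 = 1)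
              (fun w _ => by constructor <;> intro <;> omega)]
            have := count_mod2 n 1 one_lt_two; simpa using this
          rw [c0, c1, smul_eq_mul, smul_eq_mul]
          ring
  rw [hK] at hsum
  have hE : #(turanGraph n 2).edgeFinset = (n + 1) / 2 * (n / 2) := by omega
  rw [hE]
  rcases Nat.even_or_odd n with ⟨k, rfl⟩ | ⟨k, rfl⟩
  · have h4 : (k + k) ^ 2 = 4 * (k * k) := by ring
    rw [h4, Nat.mul_div_cancel_left _ (by norm_num)]
    have h1 : (k + k + 1) / 2 = k := by omega
    have h2 : (k + k) / 2 = k := by omega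
    rw [h1, h2]
  · have h4 : (2 * k + 1) ^ 2 = 4 * (k * (k + 1)) + 1 := by ring
    rw [h4]
    have h5 : (4 * (k * (k + 1)) + 1) / 4 = k * (k + 1) := by
      generalize k * (k + 1) = m
      omega
    rw [h5]
    have h1 : (2 * k + 1 + 1) / 2 = k + 1 := by omega
    have h2 : (2 * k + 1) / 2 = k := by omega
    rw [h1, h2]
    ring

lemma mantel_ncard (n : ℕ) (G' : SimpleGraph (Fin n)) (h3 : G'.CliqueFree 3) :
    G'.edgeSet.ncard ≤ n ^ 2 / 4 := by
  letI : DecidableRel G'.Adj := Classical.decRel _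
  obtain ⟨H, hdec, hmax⟩ := SimpleGraph.exists_isTuranMaximal (V := Fin n) (r := 2) (by norm_num)
  letI := hdec
  have h1 : #G'.edgeFinset ≤ #H.edgeFinset := hmax.2 h3
  obtain ⟨f⟩ := hmax.nonempty_iso_turanGraph
  have h2 : #H.edgeFinset = #(turanGraph (Fintype.card (Fin n)) 2).edgeFinset :=
    f.card_edgeFinset_eq
  rw [Fintype.card_fin, turan2_card] at h2
  calc G'.edgeSet.ncard = #G'.edgeFinset := by
        rw [Set.ncard_eq_toFinset_card']; rfl
    _ ≤ n ^ 2 / 4 := h2 ▸ h1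

theorem stmt14 {n : ℕ} (S : Set (Fin n → Fin n → Prop))
    (hS : S ⊆ TotalOrds n) (hfin : S.Finite)
    (hsh : ShattersVia (PartialOrds n) OrdCompat S)
    (hcard : n + 1 ≤ S.ncard)
    (G : (Fin n → Fin n → Prop) → (Fin n → Fin n → Prop))
    (e : (Fin n → Fin n → Prop) → Fin n × Fin n)
    (hG : ∀ A ∈ S, G A ∈ PartialOrds n ∧
      (∀ B ∈ S, B ≠ A → OrdCompat (G A) B) ∧ ¬ OrdCompat (G A) A)
    (he : ∀ A ∈ S, G A (e A).1 (e A).2 ∧ A (e A).2 (e A).1) :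
    (∀ (G' : SimpleGraph (Fin n)) (_ : DecidableRel G'.Adj),
      G'.CliqueFree 3 → G'.edgeFinset.card ≤ n ^ 2 / 4) ∧
    S.ncard ≤ n ^ 2 / 4 := by
  classical
  have mantel : ∀ (G' : SimpleGraph (Fin n)) (_ : DecidableRel G'.Adj),
      G'.CliqueFree 3 → G'.edgeFinset.card ≤ n ^ 2 / 4 := by
    intro G' hdec h3
    have h := mantel_ncard n G' h3
    rwa [Set.ncard_eq_toFinset_card'] at h
  refine ⟨mantel, ?_⟩
  have asym : ∀ r ∈ S, ∀ a b : Fin n, r a b → ¬ r b a := by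
    intro r hr a b hab hba
    exact (hS hr).1 a ((hS hr).2.1 hab hba)
  have htrans : ∀ r ∈ S, ∀ a b c : Fin n, r a b → r b c → r a c := by
    intro r hr a b c h1 h2
    exact (hS hr).2.1 h1 h2
  have notback : ∀ A ∈ S, ∀ B ∈ S, B ≠ A → ¬ B (e A).2 (e A).1 := by
    intro A hA B hB hne hby
    exact (hG A hA).2.1 B hB hne _
      (Relation.TransGen.head (Or.inl (he A hA).1)
        (Relation.TransGen.single (Or.inr hby)))
  have hne_xy : ∀ A ∈ S, (e A).1 ≠ (e A).2 := by
    intro A hA h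
    exact (hS hA).1 (e A).2 (h ▸ (he A hA).2)
  have step : ∀ A ∈ S, ∀ B ∈ S, B ≠ A → B (e A).1 (e A).2 := by
    intro A hA B hB hne
    rcases (hS hB).2.2 (e A).1 (e A).2 (hne_xy A hA) with h | h
    · exact h
    · exact absurd h (notback A hA B hB hne)
  have own : ∀ A ∈ S, A (e A).2 (e A).1 := fun A hA => (he A hA).2
  have extra3 : ∀ A B C : Fin n → Fin n → Prop, 4 ≤ S.ncard →
      ∃ D ∈ S, D ≠ A ∧ D ≠ B ∧ D ≠ C := by
    intro A B C h4
    by_contra hcon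
    push_neg at hcon
    have hsub : S ⊆ {A, B, C} := by
      intro D hD
      by_cases h1 : D = A
      · exact Or.inl h1
      by_cases h2 : D = B
      · exact Or.inr (Or.inl h2)
      exact Or.inr (Or.inr (hcon D hD h1 h2))
    have hle : S.ncard ≤ 3 := by
      calc S.ncard ≤ ({A, B, C} : Set _).ncard :=
            Set.ncard_le_ncard hsub (((Set.finite_singleton C).insert B).insert A)
        _ ≤ 3 := by
            refine le_trans (Set.ncard_insert_le _ _) ?_
            have h2 : ({B, C} : Set _).ncard ≤ 2 :=
              le_trans (Set.ncard_insert_le _ _) (by simp [Set.ncard_singleton])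
            omega
    omega
  have extra2 : ∀ A B : Fin n → Fin n → Prop, 3 ≤ S.ncard →
      ∃ D ∈ S, D ≠ A ∧ D ≠ B := by
    intro A B h3
    rcases Nat.lt_or_ge S.ncard 4 with h4 | h4
    · -- ncard = 3 : still works since we only avoid two elements
      by_contra hcon
      push_neg at hcon
      have hsub : S ⊆ {A, B} := by
        intro D hD
        by_cases h1 : D = A
        · exact Or.inl h1
        exact Or.inr (hcon D hD h1)
      have hle : S.ncard ≤ 2 :=
        le_trans (Set.ncard_le_ncard hsub ((Set.finite_singleton B).insert A))
          (le_trans (Set.ncard_insert_le _ _) (by simp [Set.ncard_singleton]))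
      omega
    · obtain ⟨D, hD, h1, h2, _⟩ := extra3 A B B h4
      exact ⟨D, hD, h1, h2⟩
  have nge2 : ∀ A ∈ S, 2 ≤ n := by
    intro A hA
    by_cases h' : 2 ≤ n
    · exact h'
    · exfalso
      have h1 := (e A).1.isLt
      have h2 := (e A).2.isLt
      exact hne_xy A hA (Fin.ext (by omega))
  have inj : ∀ A ∈ S, ∀ B ∈ S, Sym2.mk (e A).1 (e A).2 = Sym2.mk (e B).1 (e B).2 → A = B := by
    intro A hA B hB hAB
    by_contra hne
    replace hAB := (Sym2.mk_eq_mk_iff (p := e A) (q := e B)).mp hAB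
    rcases hAB with h | h
    · exact notback A hA B hB (Ne.symm hne) (by rw [h]; exact own B hB)
    · -- e A = (e B).swap
      have hb1 : (e B).1 = (e A).2 := (congrArg Prod.snd h).symm
      have hb2 : (e B).2 = (e A).1 := (congrArg Prod.fst h).symm
      have h3 : 3 ≤ S.ncard := le_trans (by have := nge2 A hA; omega) hcard
      obtain ⟨D, hD, hDA, hDB⟩ := extra2 A B h3
      have d1 : D (e A).1 (e A).2 := step A hA D hD hDA
      have d2 : D (e A).2 (e A).1 := by
        have hs := step B hB D hD hDB
        rwa [hb1, hb2] at hs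
      exact asym D hD _ _ d1 d2
  have noncyc : ∀ A ∈ S, ∀ B ∈ S, ∀ C ∈ S, C ≠ A → C ≠ B →
      ∀ a b c : Fin n, e A = (a, b) → e B = (b, c) → e C = (a, c) → False := by
    intro A hA B hB C hC hCA hCB a b c hEA hEB hEC
    have h1 : C a b := by have := step A hA C hC hCA; rwa [hEA] at this
    have h2 : C b c := by have := step B hB C hC hCB; rwa [hEB] at this
    have h3 : C c a := by have := own C hC; rwa [hEC] at this
    exact asym C hC a c (htrans C hC a b c h1 h2) h3
  have cyc : ∀ A ∈ S, ∀ B ∈ S, ∀ C ∈ S,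
      ∀ a b c : Fin n, a ≠ b → b ≠ c → a ≠ c →
      e A = (a, b) → e B = (b, c) → e C = (c, a) → False := by
    intro A hA B hB C hC a b c hab hbc hac hEA hEB hEC
    have hn3 : 3 ≤ n := by
      have h1 := a.isLt; have h2 := b.isLt; have h3 := c.isLt
      have g1 : a.val ≠ b.val := fun h => hab (Fin.ext h)
      have g2 : b.val ≠ c.val := fun h => hbc (Fin.ext h)
      have g3 : a.val ≠ c.val := fun h => hac (Fin.ext h)
      omega
    obtain ⟨D, hD, hDA, hDB, hDC⟩ := extra3 A B C (by omega)
    have d1 : D a b := by have := step A hA D hD hDA; rwa [hEA] at this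
    have d2 : D b c := by have := step B hB D hD hDB; rwa [hEB] at this
    have d3 : D c a := by have := step C hC D hD hDC; rwa [hEC] at this
    exact (hS hD).1 a (htrans D hD a c a (htrans D hD a b c d1 d2) d3)
  let Gr : SimpleGraph (Fin n) :=
    { Adj := fun x y => x ≠ y ∧ ∃ A ∈ S, e A = (x, y) ∨ e A = (y, x)
      symm := ⟨by
        rintro x y ⟨hxy, A, hA, h | h⟩
        · exact ⟨hxy.symm, A, hA, Or.inr h⟩
        · exact ⟨hxy.symm, A, hA, Or.inl h⟩⟩
      loopless := ⟨fun x h => h.1 rfl⟩ }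
  have hGrAdj : ∀ x y, Gr.Adj x y ↔ (x ≠ y ∧ ∃ A ∈ S, e A = (x, y) ∨ e A = (y, x)) :=
    fun x y => Iff.rfl
  have h3free : Gr.CliqueFree 3 := by
    intro t ht
    obtain ⟨u, v, w, huv, huw, hvw, htuvw⟩ := Finset.card_eq_three.mp ht.2
    have hclique := ht.1
    rw [htuvw] at hclique
    have adj_uv : Gr.Adj u v := hclique (by simp) (by simp) huv
    have adj_vw : Gr.Adj v w := hclique (by simp) (by simp) hvw
    have adj_uw : Gr.Adj u w := hclique (by simp) (by simp) huw
    obtain ⟨-, A, hA, hEA⟩ := adj_uv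
    obtain ⟨-, B, hB, hEB⟩ := adj_vw
    obtain ⟨-, C, hC, hEC⟩ := adj_uw
    rcases hEA with hEA | hEA <;> rcases hEB with hEB | hEB <;> rcases hEC with hEC | hEC
    · refine noncyc A hA B hB C hC ?_ ?_ u v w hEA hEB hEC
      · rintro rfl
        have hq := hEC.symm.trans hEA
        simp only [Prod.mk.injEq] at hq
        obtain ⟨h1, h2⟩ := hq
        first
        | exact huv h1 | exact huv h1.symm | exact hvw h1 | exact hvw h1.symm
        | exact huw h1 | exact huw h1.symm | exact huv h2 | exact huv h2.symm
        | exact hvw h2 | exact hvw h2.symm | exact huw h2 | exact huw h2.symm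
      · rintro rfl
        have hq := hEC.symm.trans hEB
        simp only [Prod.mk.injEq] at hq
        obtain ⟨h1, h2⟩ := hq
        first
        | exact huv h1 | exact huv h1.symm | exact hvw h1 | exact hvw h1.symm
        | exact huw h1 | exact huw h1.symm | exact huv h2 | exact huv h2.symm
        | exact hvw h2 | exact hvw h2.symm | exact huw h2 | exact huw h2.symm
    · exact cyc A hA B hB C hC u v w huv hvw huw hEA hEB hEC
    · refine noncyc C hC B hB A hA ?_ ?_ u w v hEC hEB hEA
      · rintro rfl
        have hq := hEA.symm.trans hEC
        simp only [Prod.mk.injEq] at hq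
        obtain ⟨h1, h2⟩ := hq
        first
        | exact huv h1 | exact huv h1.symm | exact hvw h1 | exact hvw h1.symm
        | exact huw h1 | exact huw h1.symm | exact huv h2 | exact huv h2.symm
        | exact hvw h2 | exact hvw h2.symm | exact huw h2 | exact huw h2.symm
      · rintro rfl
        have hq := hEA.symm.trans hEB
        simp only [Prod.mk.injEq] at hq
        obtain ⟨h1, h2⟩ := hq
        first
        | exact huv h1 | exact huv h1.symm | exact hvw h1 | exact hvw h1.symm
        | exact huw h1 | exact huw h1.symm | exact huv h2 | exact huv h2.symm
        | exact hvw h2 | exact hvw h2.symm | exact huw h2 | exact huw h2.symm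
    · refine noncyc C hC A hA B hB ?_ ?_ w u v hEC hEA hEB
      · rintro rfl
        have hq := hEB.symm.trans hEC
        simp only [Prod.mk.injEq] at hq
        obtain ⟨h1, h2⟩ := hq
        first
        | exact huv h1 | exact huv h1.symm | exact hvw h1 | exact hvw h1.symm
        | exact huw h1 | exact huw h1.symm | exact huv h2 | exact huv h2.symm
        | exact hvw h2 | exact hvw h2.symm | exact huw h2 | exact huw h2.symm
      · rintro rfl
        have hq := hEB.symm.trans hEA
        simp only [Prod.mk.injEq] at hq
        obtain ⟨h1, h2⟩ := hq
        first
        | exact huv h1 | exact huv h1.symm | exact hvw h1 | exact hvw h1.symm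
        | exact huw h1 | exact huw h1.symm | exact huv h2 | exact huv h2.symm
        | exact hvw h2 | exact hvw h2.symm | exact huw h2 | exact huw h2.symm
    · refine noncyc A hA C hC B hB ?_ ?_ v u w hEA hEC hEB
      · rintro rfl
        have hq := hEB.symm.trans hEA
        simp only [Prod.mk.injEq] at hq
        obtain ⟨h1, h2⟩ := hq
        first
        | exact huv h1 | exact huv h1.symm | exact hvw h1 | exact hvw h1.symm
        | exact huw h1 | exact huw h1.symm | exact huv h2 | exact huv h2.symm
        | exact hvw h2 | exact hvw h2.symm | exact huw h2 | exact huw h2.symm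
      · rintro rfl
        have hq := hEB.symm.trans hEC
        simp only [Prod.mk.injEq] at hq
        obtain ⟨h1, h2⟩ := hq
        first
        | exact huv h1 | exact huv h1.symm | exact hvw h1 | exact hvw h1.symm
        | exact huw h1 | exact huw h1.symm | exact huv h2 | exact huv h2.symm
        | exact hvw h2 | exact hvw h2.symm | exact huw h2 | exact huw h2.symm
    · refine noncyc B hB C hC A hA ?_ ?_ v w u hEB hEC hEA
      · rintro rfl
        have hq := hEA.symm.trans hEB
        simp only [Prod.mk.injEq] at hq
        obtain ⟨h1, h2⟩ := hq
        first
        | exact huv h1 | exact huv h1.symm | exact hvw h1 | exact hvw h1.symm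
        | exact huw h1 | exact huw h1.symm | exact huv h2 | exact huv h2.symm
        | exact hvw h2 | exact hvw h2.symm | exact huw h2 | exact huw h2.symm
      · rintro rfl
        have hq := hEA.symm.trans hEC
        simp only [Prod.mk.injEq] at hq
        obtain ⟨h1, h2⟩ := hq
        first
        | exact huv h1 | exact huv h1.symm | exact hvw h1 | exact hvw h1.symm
        | exact huw h1 | exact huw h1.symm | exact huv h2 | exact huv h2.symm
        | exact hvw h2 | exact hvw h2.symm | exact huw h2 | exact huw h2.symm
    · exact cyc C hC B hB A hA u w v huw (Ne.symm hvw) huv hEC hEB hEA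
    · refine noncyc B hB A hA C hC ?_ ?_ w v u hEB hEA hEC
      · rintro rfl
        have hq := hEC.symm.trans hEB
        simp only [Prod.mk.injEq] at hq
        obtain ⟨h1, h2⟩ := hq
        first
        | exact huv h1 | exact huv h1.symm | exact hvw h1 | exact hvw h1.symm
        | exact huw h1 | exact huw h1.symm | exact huv h2 | exact huv h2.symm
        | exact hvw h2 | exact hvw h2.symm | exact huw h2 | exact huw h2.symm
      · rintro rfl
        have hq := hEC.symm.trans hEA
        simp only [Prod.mk.injEq] at hq
        obtain ⟨h1, h2⟩ := hq
        first
        | exact huv h1 | exact huv h1.symm | exact hvw h1 | exact hvw h1.symm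
        | exact huw h1 | exact huw h1.symm | exact huv h2 | exact huv h2.symm
        | exact hvw h2 | exact hvw h2.symm | exact huw h2 | exact huw h2.symm
  have hedge : Gr.edgeSet = (fun A => Sym2.mk (e A).1 (e A).2) '' S := by
    ext z
    induction z using Sym2.ind with
    | _ x y =>
      rw [SimpleGraph.mem_edgeSet, hGrAdj]
      constructor
      · rintro ⟨hxy, A, hA, h | h⟩
        · exact ⟨A, hA, by show Sym2.mk (e A).1 (e A).2 = s(x, y); rw [h]⟩
        · exact ⟨A, hA, by show Sym2.mk (e A).1 (e A).2 = s(x, y); rw [h]; exact Sym2.eq_swap⟩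
      · rintro ⟨A, hA, hz⟩
        have hEA : Sym2.mk (e A).1 (e A).2 = Sym2.mk x y := hz
        replace hEA := (Sym2.mk_eq_mk_iff (p := e A) (q := (x, y))).mp hEA
        rcases hEA with h | h
        · have h1 : (e A).1 = x := congrArg Prod.fst h
          have h2 : (e A).2 = y := congrArg Prod.snd h
          refine ⟨by rw [← h1, ← h2]; exact hne_xy A hA, A, hA, Or.inl ?_⟩
          rw [← h1, ← h2]
        · have h1 : (e A).1 = y := congrArg Prod.fst h
          have h2 : (e A).2 = x := congrArg Prod.snd h
          refine ⟨by rw [← h1, ← h2]; exact (hne_xy A hA).symm, A, hA, Or.inr ?_⟩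
          rw [← h1, ← h2]
  have hinjOn : Set.InjOn (fun A => Sym2.mk (e A).1 (e A).2) S := fun A hA B hB h => inj A hA B hB h
  have hcount : S.ncard = Gr.edgeSet.ncard := by
    rw [hedge, Set.ncard_image_of_injOn hinjOn]
  rw [hcount]
  exact mantel_ncard n Gr h3free
end

section
/- Let k = ⌊n/2⌋ and for each pair (i,j) with 1 ≤ i ≤ k < j ≤ n let A_{i,j} be a topological order of the digraph {(j → i)} ∪ {(i' → j') : (i',j') ≠ (i,j), 1 ≤ i' ≤ k < j' ≤ n}. Then for any subset 𝒜 of pairs, the partial order generated by {(i → j) : (i,j) ∈ 𝒜} is compatible with A_{i',j'} if and only if (i',j') ∉ 𝒜. -/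
theorem stmt17 {n : ℕ}
    (A : Fin n × Fin n → (Fin n → Fin n → Prop))
    (hA : ∀ p : Fin n × Fin n, p.1.val < n / 2 → n / 2 ≤ p.2.val →
      A p ∈ TotalOrds n ∧
      ∀ a b : Fin n, ((a = p.2 ∧ b = p.1) ∨
        (a.val < n / 2 ∧ n / 2 ≤ b.val ∧ (a, b) ≠ p)) → A p a b)
    (𝒜 : Set (Fin n × Fin n))
    (h𝒜 : 𝒜 ⊆ {p : Fin n × Fin n | p.1.val < n / 2 ∧ n / 2 ≤ p.2.val}) :
    ∀ p : Fin n × Fin n, p.1.val < n / 2 → n / 2 ≤ p.2.val →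
      (OrdCompat (Relation.TransGen (fun a b => (a, b) ∈ 𝒜)) (A p) ↔ p ∉ 𝒜) := by
  intro p hp1 hp2
  obtain ⟨⟨hirr, htr, -⟩, hedges⟩ := hA p hp1 hp2
  constructor
  · intro hc hmem
    exact hc p.1 (Relation.TransGen.head (Or.inl (Relation.TransGen.single hmem))
      (Relation.TransGen.single (Or.inr (hedges p.2 p.1 (Or.inl ⟨rfl, rfl⟩)))))
  · intro hp
    have hsub : ∀ a b : Fin n,
        (Relation.TransGen (fun a b => (a, b) ∈ 𝒜) a b ∨ A p a b) → A p a b := by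
      intro a b h
      rcases h with h | h
      · induction h with
        | single h => exact hedges _ _ (Or.inr ⟨(h𝒜 h).1, (h𝒜 h).2, fun he => hp (he ▸ h)⟩)
        | tail _ h3 ih =>
            exact htr ih (hedges _ _ (Or.inr ⟨(h𝒜 h3).1, (h𝒜 h3).2, fun he => hp (he ▸ h3)⟩))
      · exact h
    have hsub2 : ∀ a b : Fin n,
        Relation.TransGen (fun a b => Relation.TransGen (fun a b => (a, b) ∈ 𝒜) a b ∨ A p a b)
          a b → A p a b := by
      intro a b h
      induction h with
      | single h => exact hsub _ _ h
      | tail _ h3 ih => exact htr ih (hsub _ _ h3)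
    exact fun a ha => hirr a (hsub2 a a ha)
end

section
/- For n ≥ 4, consider the digraph H on vertices w₁,...,w_n with edge sets H_i = {w₁ → w_{i+3}, w_{i+3} → w₂} for 1 ≤ i ≤ n−3 and H_{n−3+i} = {w₃ → w_{i+3}} for 1 ≤ i ≤ n−3. For every subset S of {H₁,...,H_{2(n−3)}}, there is a choice of one edge from each member of S such that the digraph obtained from ⋃ H_i by deleting the other edges of members of S and reversing the chosen edges is acyclic. -/
theorem stmt18 {n : ℕ} (hn : 4 ≤ n)
    (H : ℕ → Set (Fin n × Fin n))
    (hH : ∀ i, 1 ≤ i → i ≤ 2 * (n - 3) →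
      H i = if i ≤ n - 3 then
        {q : Fin n × Fin n | (q.1.val = 0 ∧ q.2.val = i + 2) ∨ (q.1.val = i + 2 ∧ q.2.val = 1)}
      else {q : Fin n × Fin n | q.1.val = 2 ∧ q.2.val = (i - (n - 3)) + 2}) :
    ∀ S ⊆ Set.Icc 1 (2 * (n - 3)),
      ∃ c : ℕ → Fin n × Fin n,
        (∀ i ∈ S, c i ∈ H i) ∧
        IsAcyclicRel (fun a b =>
          (∃ i, 1 ≤ i ∧ i ≤ 2 * (n - 3) ∧ i ∉ S ∧ (a, b) ∈ H i) ∨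
          (∃ i ∈ S, c i = (b, a))) := by
  classical
  intro S hS
  have hnpos : 0 < n := by omega
  set c : ℕ → Fin n × Fin n := fun i =>
    if i ≤ n - 3 then
      (if n - 3 + i ∈ S then ((⟨0, by omega⟩ : Fin n), ⟨(i+2) % n, Nat.mod_lt _ hnpos⟩)
       else (⟨(i+2) % n, Nat.mod_lt _ hnpos⟩, (⟨1, by omega⟩ : Fin n)))
    else ((⟨2, by omega⟩ : Fin n), ⟨(i - (n-3) + 2) % n, Nat.mod_lt _ hnpos⟩) with hc
  refine ⟨c, ?_, ?_⟩
  · intro i hiS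
    obtain ⟨hi1, hi2⟩ := hS hiS
    rw [hH i hi1 hi2]
    by_cases hle : i ≤ n - 3
    · have hmod : (i + 2) % n = i + 2 := Nat.mod_eq_of_lt (by omega)
      simp only [hc, hle, if_pos, Set.mem_setOf_eq]
      by_cases hj : n - 3 + i ∈ S
      · simp [hj, hmod]
      · simp [hj, hmod]
    · have hmod : (i - (n-3) + 2) % n = i - (n-3) + 2 := Nat.mod_eq_of_lt (by omega)
      simp only [hc, hle]
      simp [hle, hmod]
  · set ρ : Fin n → ℕ := fun v =>
      if v.val = 0 then 1 else if v.val = 1 then 5 else if v.val = 2 then 3 else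
        if v.val - 2 ∈ S then (if n - 3 + (v.val - 2) ∈ S then 0 else 6)
        else (if n - 3 + (v.val - 2) ∈ S then 2 else 4) with hρ
    have key : ∀ a b : Fin n,
        ((∃ i, 1 ≤ i ∧ i ≤ 2 * (n - 3) ∧ i ∉ S ∧ (a, b) ∈ H i) ∨
          (∃ i ∈ S, c i = (b, a))) → ρ a < ρ b := by
      rintro a b (⟨i, hi1, hi2, hiS, hab⟩ | ⟨i, hiS, hci⟩)
      · rw [hH i hi1 hi2] at hab
        by_cases hle : i ≤ n - 3
        · rw [if_pos hle] at hab
          rcases hab with ⟨ha, hb⟩ | ⟨ha, hb⟩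
          · have ha' : a.val = 0 := ha
            have hb' : b.val = i + 2 := hb
            have hb2 : b.val - 2 = i := by omega
            have hρa : ρ a = 1 := by simp [hρ, ha']
            have hρb : ρ b = if n - 3 + i ∈ S then 2 else 4 := by
              have h0 : ¬ b.val = 0 := by omega
              have h1 : ¬ b.val = 1 := by omega
              have h2 : ¬ b.val = 2 := by omega
              simp [hρ, h0, h1, h2, hb2, hiS]
            rw [hρa, hρb]; split_ifs <;> omega
          · have ha' : a.val = i + 2 := ha
            have hb' : b.val = 1 := hb
            have ha2 : a.val - 2 = i := by omega
            have hρb : ρ b = 5 := by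
              have h0 : ¬ b.val = 0 := by omega
              simp [hρ, h0, hb']
            have hρa : ρ a = if n - 3 + i ∈ S then 2 else 4 := by
              have h0 : ¬ a.val = 0 := by omega
              have h1 : ¬ a.val = 1 := by omega
              have h2 : ¬ a.val = 2 := by omega
              simp [hρ, h0, h1, h2, ha2, hiS]
            rw [hρa, hρb]; split_ifs <;> omega
        · rw [if_neg hle] at hab
          obtain ⟨ha, hb⟩ := hab
          have ha' : a.val = 2 := ha
          have hb' : b.val = i - (n - 3) + 2 := hb
          have hρa : ρ a = 3 := by
            have h0 : ¬ a.val = 0 := by omega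
            have h1 : ¬ a.val = 1 := by omega
            simp [hρ, h0, h1, ha']
          have hj : n - 3 + (b.val - 2) = i := by omega
          have hρb : ρ b = if b.val - 2 ∈ S then 6 else 4 := by
            have h0 : ¬ b.val = 0 := by omega
            have h1 : ¬ b.val = 1 := by omega
            have h2 : ¬ b.val = 2 := by omega
            simp [hρ, h0, h1, h2, hj, hiS]
          rw [hρa, hρb]; split_ifs <;> omega
      · obtain ⟨hi1, hi2⟩ := hS hiS
        by_cases hle : i ≤ n - 3
        · have hmod : (i + 2) % n = i + 2 := Nat.mod_eq_of_lt (by omega)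
          by_cases hj : n - 3 + i ∈ S
          · have hceq : c i = ((⟨0, by omega⟩ : Fin n), ⟨(i+2) % n, Nat.mod_lt _ hnpos⟩) := by
              simp [hc, hle, hj]
            rw [hceq] at hci
            injection hci with h1 h2
            have hb : b.val = 0 := by rw [← h1]
            have ha : a.val = i + 2 := by rw [← h2]; exact hmod
            have ha2 : a.val - 2 = i := by omega
            have hρb : ρ b = 1 := by simp [hρ, hb]
            have hρa : ρ a = 0 := by
              have h0 : ¬ a.val = 0 := by omega
              have h1' : ¬ a.val = 1 := by omega
              have h2' : ¬ a.val = 2 := by omega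
              simp [hρ, h0, h1', h2', ha2, hiS, hj]
            omega
          · have hceq : c i = ((⟨(i+2) % n, Nat.mod_lt _ hnpos⟩ : Fin n), (⟨1, by omega⟩ : Fin n)) := by
              simp [hc, hle, hj]
            rw [hceq] at hci
            injection hci with h1 h2
            have hb : b.val = i + 2 := by rw [← h1]; exact hmod
            have ha : a.val = 1 := by rw [← h2]
            have hb2 : b.val - 2 = i := by omega
            have hρa : ρ a = 5 := by
              have h0 : ¬ a.val = 0 := by omega
              simp [hρ, h0, ha]
            have hρb : ρ b = 6 := by
              have h0 : ¬ b.val = 0 := by omega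
              have h1' : ¬ b.val = 1 := by omega
              have h2' : ¬ b.val = 2 := by omega
              simp [hρ, h0, h1', h2', hb2, hiS, hj]
            omega
        · have hmod : (i - (n-3) + 2) % n = i - (n-3) + 2 := Nat.mod_eq_of_lt (by omega)
          have hceq : c i = ((⟨2, by omega⟩ : Fin n), ⟨(i - (n-3) + 2) % n, Nat.mod_lt _ hnpos⟩) := by
            simp [hc, hle]
          rw [hceq] at hci
          injection hci with h1 h2
          have hb : b.val = 2 := by rw [← h1]
          have ha : a.val = i - (n - 3) + 2 := by rw [← h2]; exact hmod
          have hj : n - 3 + (a.val - 2) = i := by omega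
          have hρb : ρ b = 3 := by
            have h0 : ¬ b.val = 0 := by omega
            have h1' : ¬ b.val = 1 := by omega
            simp [hρ, h0, h1', hb]
          have hρa : ρ a = if a.val - 2 ∈ S then 0 else 2 := by
            have h0 : ¬ a.val = 0 := by omega
            have h1' : ¬ a.val = 1 := by omega
            have h2' : ¬ a.val = 2 := by omega
            simp [hρ, h0, h1', h2', hj, hiS]
          rw [hρb, hρa]; split_ifs <;> omega
    have mono : ∀ a b : Fin n, Relation.TransGen (fun a b =>
        (∃ i, 1 ≤ i ∧ i ≤ 2 * (n - 3) ∧ i ∉ S ∧ (a, b) ∈ H i) ∨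
          (∃ i ∈ S, c i = (b, a))) a b → ρ a < ρ b := by
      intro a b h
      induction h with
      | single h => exact key _ _ h
      | tail _ h ih => exact ih.trans (key _ _ h)
    intro a h
    exact absurd (mono a a h) (lt_irrefl _)
end
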